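/- arXiv:2407.14251 — 9 statements merged into one kernel-verified Lean document; each statement's English description precedes it below -/
import Mathlib

section
/- Let E be a finite-dimensional real inner product space, let g : E → ℝ be convex and continuous, and let λ > 0. Then for every x ∈ E the function u ↦ g(u) + (λ/2)‖u − x‖² attains its infimum at a unique point prox_{g/λ}(x), and the Moreau envelope g̃^λ is differentiable on E with gradient ∇g̃^λ(x) = λ ( x − prox_{g/λ}(x) ) for every x ∈ E. -/
open Set Filter Topology

local notation "⟪" x ", " y "⟫" => @inner ℝ _ _ x y

section Aux

variable {E : Type*} [NormedAddCommGroup E] [InnerProductSpace ℝ E]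

private lemma inner_sq_identity_A (q x y : E) :
    ‖q - y‖ ^ 2 - ‖q - x‖ ^ 2 = 2 * ⟪x - q, y - x⟫ + ‖y - x‖ ^ 2 := by
  simp only [← real_inner_self_eq_norm_sq, inner_sub_left, inner_sub_right]
  simp only [real_inner_comm x q, real_inner_comm y q, real_inner_comm y x]
  ring

private lemma inner_sq_identity_B (q x y r : E) :
    ‖r - y‖ ^ 2 - ‖r - x‖ ^ 2 + ‖r - q‖ ^ 2 - 2 * ⟪x - q, y - x⟫
      = ‖(r - q) - (y - x)‖ ^ 2 := by
  simp only [← real_inner_self_eq_norm_sq, inner_sub_left, inner_sub_right]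
  simp only [real_inner_comm x q, real_inner_comm y q, real_inner_comm y x,
    real_inner_comm r q, real_inner_comm r x, real_inner_comm r y]
  ring

/-- At a minimizer of an `m`-strongly convex function, we have a quadratic growth bound. -/
private lemma strong_min_growth {f : E → ℝ} {m : ℝ}
    (hf : StrongConvexOn Set.univ m f) {q : E} (hq : IsMinOn f Set.univ q) (u : E) :
    f q + m / 2 * ‖u - q‖ ^ 2 ≤ f u := by
  set X : ℝ := m / 2 * ‖u - q‖ ^ 2 with hX
  have key : ∀ t : ℝ, 0 < t → t < 1 → f q + (1 - t) * X ≤ f u := by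
    intro t ht0 ht1
    have h1 := hf.2 (mem_univ u) (mem_univ q) ht0.le (by linarith : (0:ℝ) ≤ 1 - t)
      (by ring)
    have h2 : f q ≤ f (t • u + (1 - t) • q) := hq (mem_univ _)
    simp only [smul_eq_mul] at h1
    rw [← hX] at h1
    have h4 : t * (f q + (1 - t) * X) ≤ t * f u := by nlinarith [h1, h2]
    exact le_of_mul_le_mul_left h4 ht0
  have tends : Tendsto (fun t : ℝ => f q + (1 - t) * X) (𝓝[>] (0:ℝ))
      (𝓝 (f q + (1 - 0) * X)) := by
    exact ((continuous_const.add ((continuous_const.sub continuous_id).mul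
      continuous_const)).tendsto 0).mono_left nhdsWithin_le_nhds
  have := le_of_tendsto tends (by
    filter_upwards [Ioo_mem_nhdsGT_of_mem (by simp : (0:ℝ) ∈ Ico (0:ℝ) 1)] with t ht
    exact key t ht.1 ht.2)
  linarith

end Aux

/-- **Moreau envelope: proximal map and gradient.**
Let `E` be a finite-dimensional real inner product space, `g : E → ℝ` convex and
continuous, and `λ > 0`.  Then for every `x` the function
`u ↦ g u + (λ/2)‖u - x‖²` attains its infimum at a unique point `prox x`, and the
Moreau envelope `g̃^λ(y) = ⨅ u, g u + (λ/2)‖u - y‖²` has gradient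
`λ • (x - prox x)` at every `x`. -/
theorem moreau_envelope_prox_and_gradient
    {E : Type*} [NormedAddCommGroup E] [InnerProductSpace ℝ E] [FiniteDimensional ℝ E]
    (g : E → ℝ) (hconv : ConvexOn ℝ Set.univ g) (hcont : Continuous g)
    (lam : ℝ) (hlam : 0 < lam) :
    ∃ prox : E → E,
      (∀ x u : E,
        IsMinOn (fun v : E => g v + lam / 2 * ‖v - x‖ ^ 2) Set.univ u ↔ u = prox x) ∧
      ∀ x : E,
        HasGradientAt (fun y : E => ⨅ u : E, (g u + lam / 2 * ‖u - y‖ ^ 2))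
          (lam • (x - prox x)) x := by
  set φ : E → E → ℝ := fun x v => g v + lam / 2 * ‖v - x‖ ^ 2 with hφ
  -- strong convexity of `φ x`
  have hstrong : ∀ x : E, StrongConvexOn Set.univ lam (φ x) := by
    intro x
    rw [strongConvexOn_iff_convex]
    have heq : (fun v => φ x v - lam / 2 * ‖v‖ ^ 2)
        = fun v => g v + (lam / 2 * ‖x‖ ^ 2 - lam * ⟪v, x⟫) := by
      funext v
      have := norm_sub_sq_real v x
      simp only [hφ]
      nlinarith [this]
    rw [heq]
    refine hconv.add ⟨convex_univ, ?_⟩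
    intro u _ v _ a b ha hb hab
    refine le_of_eq ?_
    simp only [inner_add_left, real_inner_smul_left, smul_eq_mul]
    linear_combination (-(lam / 2) * ‖x‖ ^ 2) * hab
  -- a global affine lower bound for g
  obtain ⟨C, hC⟩ : ∃ C, ∀ v ∈ Metric.closedBall (0:E) 1, ‖g v‖ ≤ C :=
    (isCompact_closedBall (0:E) 1).exists_bound_of_continuousOn hcont.continuousOn
  have hC0 : 0 ≤ C := le_trans (norm_nonneg _) (hC 0 (by simp))
  have hg0 : |g 0| ≤ C := hC 0 (by simp)
  have glower : ∀ u : E, -(2*C) - 2*C*‖u‖ ≤ g u := by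
    intro u
    rcases le_or_gt ‖u‖ 1 with h1 | h1
    · have : ‖g u‖ ≤ C := hC u (by simpa [Metric.mem_closedBall, dist_eq_norm] using h1)
      have := abs_le.1 this
      nlinarith [norm_nonneg u]
    · set t : ℝ := ‖u‖⁻¹ with htdef
      have hu0 : (0:ℝ) < ‖u‖ := by linarith
      have ht0 : 0 < t := by positivity
      have ht1 : t < 1 := by
        rw [htdef, inv_lt_one_iff₀]; right; exact h1
      have hconvineq := hconv.2 (mem_univ u) (mem_univ (0:E)) ht0.le
        (by linarith : (0:ℝ) ≤ 1 - t) (by ring)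
      have hmem : t • u + (1 - t) • (0:E) ∈ Metric.closedBall (0:E) 1 := by
        simp [Metric.mem_closedBall, dist_eq_norm, norm_smul, htdef,
          abs_of_pos ht0]
        rw [inv_mul_cancel₀ hu0.ne']
      have hb := abs_le.1 (hC _ hmem)
      simp only [smul_eq_mul] at hconvineq
      have hg0' := abs_le.1 hg0
      -- t * g u ≥ -C - (1-t) * C , so g u ≥ -2C/t = -2C‖u‖
      have h2 : -(2*C) ≤ t * g u := by nlinarith
      have h3 : -(2*C) * ‖u‖ ≤ g u := by
        have := mul_le_mul_of_nonneg_left h2 hu0.le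
        rw [htdef] at this
        rw [mul_inv_cancel_left₀ hu0.ne'] at this
        nlinarith
      nlinarith
  -- existence of minimizers
  have hφcont : ∀ x : E, Continuous (φ x) := by
    intro x; exact hcont.add (by fun_prop)
  have exists_min : ∀ x : E, ∃ q : E, IsMinOn (φ x) Set.univ q := by
    intro x
    have hn : Tendsto (fun u : E => ‖u - x‖) (cocompact E) atTop := by
      simpa [dist_eq_norm] using tendsto_dist_right_cocompact_atTop x
    set A : ℝ := -(2*C) - 2*C*‖x‖ with hA
    have hψ : Tendsto (fun r : ℝ => A - 2*C*r + lam/2*r^2) atTop atTop := by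
      apply tendsto_atTop_mono' _ _ (tendsto_atTop_add_const_left _ A tendsto_id)
      filter_upwards [eventually_ge_atTop (max 1 (2*(2*C+1)/lam))] with r hr
      have hr1 : (1:ℝ) ≤ r := le_trans (le_max_left _ _) hr
      have hr2 : 2*(2*C+1)/lam ≤ r := le_trans (le_max_right _ _) hr
      have : 2*(2*C+1) ≤ lam * r := by
        rw [div_le_iff₀ hlam] at hr2; linarith [mul_comm r lam]
      simp only [id]
      nlinarith
    have hcomp : Tendsto (fun u : E => A - 2*C*‖u - x‖ + lam/2*‖u - x‖^2)
        (cocompact E) atTop := hψ.comp hn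
    have hmono : ∀ u : E, A - 2*C*‖u - x‖ + lam/2*‖u - x‖^2 ≤ φ x u := by
      intro u
      have h1 : ‖u‖ ≤ ‖u - x‖ + ‖x‖ := by
        calc ‖u‖ = ‖u - x + x‖ := by rw [sub_add_cancel]
        _ ≤ ‖u - x‖ + ‖x‖ := norm_add_le _ _
      have := glower u
      simp only [hφ, hA]
      nlinarith
    have hcoer : Tendsto (φ x) (cocompact E) atTop :=
      tendsto_atTop_mono hmono hcomp
    obtain ⟨q, hq⟩ := (hφcont x).exists_forall_le hcoer
    exact ⟨q, isMinOn_univ_iff.2 hq⟩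
  choose p hp using exists_min
  have huniq : ∀ x u : E, IsMinOn (φ x) Set.univ u ↔ u = p x := by
    intro x u
    constructor
    · intro hu
      exact ((hstrong x).strictConvexOn hlam).eq_of_isMinOn hu (hp x)
        (mem_univ u) (mem_univ (p x))
    · rintro rfl; exact hp x
  refine ⟨p, huniq, ?_⟩
  intro x
  set e : E → ℝ := fun y => ⨅ u : E, (g u + lam / 2 * ‖u - y‖ ^ 2) with he
  have e_eq : ∀ y : E, e y = φ y (p y) := by
    intro y
    exact IsLeast.csInf_eq ⟨⟨p y, rfl⟩, by rintro _ ⟨u, rfl⟩; exact hp y (mem_univ u)⟩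
  have e_le : ∀ y u : E, e y ≤ φ y u := by
    intro y u; rw [e_eq]; exact hp y (mem_univ u)
  set q : E := p x with hq
  -- the two-sided bound
  have bound : ∀ y : E, 0 ≤ e y - e x - ⟪lam • (x - q), y - x⟫ ∧
      e y - e x - ⟪lam • (x - q), y - x⟫ ≤ lam / 2 * ‖y - x‖ ^ 2 := by
    intro y
    have hinner : ⟪lam • (x - q), y - x⟫ = lam * ⟪x - q, y - x⟫ :=
      real_inner_smul_left _ _ _
    constructor
    · -- lower bound, using strong minimality at x applied to p y
      set r : E := p y with hr
      have h1 : φ x q + lam / 2 * ‖r - q‖ ^ 2 ≤ φ x r :=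
        strong_min_growth (hstrong x) (hp x) r
      have h2 : e y = φ y r := e_eq y
      have h3 : e x = φ x q := e_eq x
      have hB := inner_sq_identity_B q x y r
      have hnn : (0:ℝ) ≤ ‖(r - q) - (y - x)‖ ^ 2 := sq_nonneg _
      rw [hinner, h2, h3]
      simp only [hφ] at h1 ⊢
      nlinarith
    · -- upper bound, testing φ y at q
      have h1 : e y ≤ φ y q := e_le y q
      have h2 : e x = φ x q := e_eq x
      have hA := inner_sq_identity_A q x y
      rw [hinner, h2]
      simp only [hφ] at h1 ⊢
      nlinarith
  -- conclude the gradient statement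
  rw [HasGradientAt, HasGradientAtFilter]
  change HasFDerivAt _ _ x
  rw [hasFDerivAt_iff_isLittleO]
  rw [Asymptotics.isLittleO_iff]
  intro c hc
  have hball : Metric.closedBall x (2*c/lam) ∈ 𝓝 x :=
    Metric.closedBall_mem_nhds x (by positivity)
  filter_upwards [hball] with y hy
  have hy' : ‖y - x‖ ≤ 2*c/lam := by
    rwa [Metric.mem_closedBall, dist_eq_norm] at hy
  obtain ⟨hb1, hb2⟩ := bound y
  have htodual : (InnerProductSpace.toDual ℝ E (lam • (x - q))) (y - x)
      = ⟪lam • (x - q), y - x⟫ := InnerProductSpace.toDual_apply_apply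
  rw [Real.norm_eq_abs]
  rw [htodual]
  rw [abs_of_nonneg hb1]
  have h3 : lam / 2 * ‖y - x‖ ^ 2 ≤ c * ‖y - x‖ := by
    have h4 : lam * ‖y - x‖ ≤ 2 * c := by
      rw [le_div_iff₀ hlam] at hy'; linarith [mul_comm (‖y - x‖) lam]
    nlinarith [norm_nonneg (y - x)]
  linarith
end

section
/- Let E be a finite-dimensional real inner product space, let g : E → ℝ be convex and continuous, and let λ > 0. Then the Moreau envelope g̃^λ is λ-smooth: it is differentiable and ‖∇g̃^λ(x) − ∇g̃^λ(y)‖ ≤ λ‖x − y‖ for all x, y ∈ E. -/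
open Filter Topology

local notation "⟪" x ", " y "⟫" => @inner ℝ _ _ x y

section Aux
variable {E : Type*} [NormedAddCommGroup E] [InnerProductSpace ℝ E]

lemma quad_comb (a b x : E) (t : ℝ) :
    ‖((1-t)•a + t•b) - x‖^2
      = (1-t)*‖a-x‖^2 + t*‖b-x‖^2 - t*(1-t)*‖a-b‖^2 := by
  have h : ∀ z : E, ‖z‖^2 = ⟪z, z⟫ := fun z => (real_inner_self_eq_norm_sq z).symm
  rw [h, h, h, h]
  simp only [inner_sub_left, inner_sub_right, inner_add_left, inner_add_right,
    real_inner_smul_left, real_inner_smul_right]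
  rw [real_inner_comm b a, real_inner_comm x a, real_inner_comm x b]
  ring

lemma norm_sub_sq_expand (a b : E) :
    ‖a - b‖^2 = ‖a‖^2 - 2*⟪a,b⟫ + ‖b‖^2 := by
  have h : ∀ z : E, ‖z‖^2 = ⟪z, z⟫ := fun z => (real_inner_self_eq_norm_sq z).symm
  rw [h, h, h]
  simp only [inner_sub_left, inner_sub_right]
  rw [real_inner_comm b a]; ring

end Aux

set_option maxHeartbeats 1000000 in
/-- **Moreau envelope of a convex function is λ-smooth.**
Let `E` be a finite-dimensional real inner product space, `g : E → ℝ` convex and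
continuous, `λ > 0`.  Then the Moreau envelope `g̃^λ` is differentiable and its
gradient is `λ`-Lipschitz: `‖∇g̃^λ(x) − ∇g̃^λ(y)‖ ≤ λ‖x − y‖` for all `x, y`. -/
theorem moreau_envelope_smooth
    {E : Type*} [NormedAddCommGroup E] [InnerProductSpace ℝ E] [FiniteDimensional ℝ E]
    (g : E → ℝ) (hconv : ConvexOn ℝ Set.univ g) (hcont : Continuous g)
    (lam : ℝ) (hlam : 0 < lam) :
    Differentiable ℝ (fun x : E => ⨅ u : E, (g u + lam / 2 * ‖u - x‖ ^ 2)) ∧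
      ∀ x y : E,
        ‖gradient (fun z : E => ⨅ u : E, (g u + lam / 2 * ‖u - z‖ ^ 2)) x
            - gradient (fun z : E => ⨅ u : E, (g u + lam / 2 * ‖u - z‖ ^ 2)) y‖
          ≤ lam * ‖x - y‖ := by
  set f : E → E → ℝ := fun x u => g u + lam / 2 * ‖u - x‖ ^ 2 with hf
  -- linear lower bound on g
  obtain ⟨C, hC0, hCg⟩ : ∃ C : ℝ, 0 ≤ C ∧ ∀ u : E, -(C*(1+‖u‖)) ≤ g u := by
    obtain ⟨v0, _, hv0⟩ := (isCompact_closedBall (0:E) 1).exists_isMinOn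
      ⟨0, by simp⟩ hcont.continuousOn
    set m : ℝ := g v0 with hmdef
    have hm : ∀ v : E, ‖v‖ ≤ 1 → m ≤ g v := fun v hv =>
      hv0 (by simpa [Metric.mem_closedBall, dist_eq_norm] using hv)
    refine ⟨|m| + |g 0|, by positivity, fun u => ?_⟩
    rcases le_or_gt ‖u‖ 1 with hu | hu
    · have := hm u hu
      have h1 : -|m| ≤ m := neg_abs_le m
      have h2 : (0:ℝ) ≤ ‖u‖ := norm_nonneg u
      nlinarith [abs_nonneg m, abs_nonneg (g 0)]
    · set t : ℝ := ‖u‖⁻¹ with htdef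
      have hu0 : (0:ℝ) < ‖u‖ := lt_trans one_pos hu
      have ht0 : 0 < t := inv_pos.mpr hu0
      have ht1 : t ≤ 1 := by
        rw [htdef]; exact inv_le_one_of_one_le₀ (le_of_lt hu)
      have hnorm : ‖t • u‖ ≤ 1 := by
        rw [norm_smul, Real.norm_eq_abs, abs_of_pos ht0, htdef]
        rw [inv_mul_cancel₀ (ne_of_gt hu0)]
      have hcv := hconv.2 (Set.mem_univ (0:E)) (Set.mem_univ u)
        (by linarith : (0:ℝ) ≤ 1 - t) (le_of_lt ht0) (by ring)
      simp only [smul_zero, zero_add, smul_eq_mul] at hcv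
      have hgtu : m ≤ g (t • u) := hm _ hnorm
      -- m ≤ (1-t) g 0 + t g u  ⇒  g u ≥ (m - (1-t) g 0)/t
      have hgu : (m - (1-t) * g 0) / t ≤ g u := by
        rw [div_le_iff₀ ht0]
        nlinarith
      have htinv : 1 / t = ‖u‖ := by rw [htdef, one_div, inv_inv]
      have hexp : (m - (1-t) * g 0) / t = ‖u‖ * m - (‖u‖ - 1) * g 0 := by
        field_simp
        rw [htdef]
        field_simp
      rw [hexp] at hgu
      have h1 : -( (|m| + |g 0|) * (1 + ‖u‖)) ≤ ‖u‖ * m - (‖u‖ - 1) * g 0 := by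
        have := neg_abs_le m
        have := neg_abs_le (g 0)
        have := le_abs_self (g 0)
        nlinarith [abs_nonneg m, abs_nonneg (g 0)]
      linarith
  -- continuity and coercivity of f x, existence of minimizer
  have hfc : ∀ x : E, Continuous (f x) := by
    intro x
    exact hcont.add (by fun_prop)
  have hcoer : ∀ x : E, Tendsto (f x) (cocompact E) atTop := by
    intro x
    have h1 : Tendsto (fun r : ℝ => -(C*(1+r)) + lam/2 * (r - ‖x‖)^2) atTop atTop := by
      have ha0 : Tendsto (fun r : ℝ => lam/2 * r) atTop atTop :=
        Tendsto.const_mul_atTop (by positivity) tendsto_id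
      have ha := tendsto_atTop_add_const_right atTop (-(C + lam*‖x‖)) ha0
      have hb : Tendsto (fun r : ℝ => r * (lam/2 * r + -(C + lam*‖x‖))) atTop atTop :=
        Tendsto.atTop_mul_atTop₀ tendsto_id ha
      have hc := tendsto_atTop_add_const_right atTop (lam/2*‖x‖^2 - C) hb
      refine hc.congr (fun r => by ring)
    have h2 : Tendsto (fun u : E => -(C*(1+‖u‖)) + lam/2 * (‖u‖ - ‖x‖)^2)
        (cocompact E) atTop := h1.comp tendsto_norm_cocompact_atTop
    refine tendsto_atTop_mono (fun u => ?_) h2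
    have hn : (‖u‖ - ‖x‖)^2 ≤ ‖u - x‖^2 := by
      have := abs_norm_sub_norm_le u x
      have h2 : |‖u‖ - ‖x‖|^2 = (‖u‖-‖x‖)^2 := sq_abs _
      nlinarith [abs_nonneg (‖u‖ - ‖x‖), norm_nonneg (u - x)]
    have := hCg u
    simp only [f]
    nlinarith
  have hex : ∀ x : E, ∃ p : E, ∀ u : E, f x p ≤ f x u := by
    intro x
    exact (hfc x).exists_forall_le (hcoer x)
  choose prox hprox using hex
  -- strong minimality
  have hstrong : ∀ x u : E, f x (prox x) + lam/2 * ‖u - prox x‖^2 ≤ f x u := by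
    intro x u
    set p := prox x with hp
    have key : ∀ t : ℝ, t ∈ Set.Ioo (0:ℝ) 1 →
        f x p + lam/2 * (1-t) * ‖u - p‖^2 ≤ f x u := by
      intro t ⟨ht0, ht1⟩
      have hmem : (1-t)•p + t•u ∈ Set.univ := Set.mem_univ _
      have hcg := hconv.2 (Set.mem_univ p) (Set.mem_univ u)
        (by linarith : (0:ℝ) ≤ 1-t) (le_of_lt ht0) (by ring)
      have hq := quad_comb p u x t
      have hmin := hprox x ((1-t)•p + t•u)
      have hfle : f x ((1-t)•p + t•u)
          ≤ (1-t) * f x p + t * f x u - lam/2 * (t*(1-t)*‖p-u‖^2) := by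
        simp only [f]
        rw [hq]
        have := hconv.2 (Set.mem_univ p) (Set.mem_univ u)
          (by linarith : (0:ℝ) ≤ 1-t) (le_of_lt ht0) (by ring)
        simp only [smul_eq_mul] at this
        nlinarith
      have h3 : f x p ≤ (1-t) * f x p + t * f x u - lam/2 * (t*(1-t)*‖p-u‖^2) :=
        le_trans hmin hfle
      have hnr : ‖p - u‖ = ‖u - p‖ := norm_sub_rev _ _
      rw [hnr] at h3
      nlinarith
    have hlim : Tendsto (fun t : ℝ => f x p + lam/2 * (1-t) * ‖u - p‖^2)
        (𝓝[>] (0:ℝ)) (𝓝 (f x p + lam/2 * (1-0) * ‖u - p‖^2)) := by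
      apply Tendsto.mono_left _ nhdsWithin_le_nhds
      exact (Continuous.tendsto (by continuity) 0)
    have hev : ∀ᶠ t in 𝓝[>] (0:ℝ), f x p + lam/2 * (1-t) * ‖u - p‖^2 ≤ f x u := by
      filter_upwards [Ioo_mem_nhdsGT_of_mem (by norm_num : (0:ℝ) ∈ Set.Ico 0 1)] with t ht
      exact key t ht
    have := le_of_tendsto hlim hev
    simpa using this
  -- firm nonexpansiveness
  have hfirm : ∀ x y : E, ‖prox x - prox y‖^2 ≤ ⟪prox x - prox y, x - y⟫ := by
    intro x y
    set p := prox x; set q := prox y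
    have h1 := hstrong x q
    have h2 := hstrong y p
    simp only [f] at h1 h2
    have e2 : ‖q - x‖^2 + ‖p - y‖^2 - ‖p - x‖^2 - ‖q - y‖^2 = 2*⟪p - q, x - y⟫ := by
      have h : ∀ z w : E, ‖z - w‖^2 = ⟪z,z⟫ - 2*⟪z,w⟫ + ⟪w,w⟫ := by
        intro z w
        rw [norm_sub_sq_expand, ← real_inner_self_eq_norm_sq, ← real_inner_self_eq_norm_sq]
      rw [h, h, h, h]
      simp only [inner_sub_left, inner_sub_right]
      ring
    have hrev : ‖q - p‖ = ‖p - q‖ := norm_sub_rev _ _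
    rw [hrev] at h1
    nlinarith [h1, h2, e2, hlam]
  -- the gradient candidate and its Lipschitz property
  set G : E → E := fun x => lam • (x - prox x) with hG
  have hlip : ∀ x y : E, ‖(x - prox x) - (y - prox y)‖ ≤ ‖x - y‖ := by
    intro x y
    have h1 := hfirm x y
    have key : ‖(x - prox x) - (y - prox y)‖^2 ≤ ‖x - y‖^2 := by
      have he : (x - prox x) - (y - prox y) = (x - y) - (prox x - prox y) := by abel
      rw [he, norm_sub_sq_expand]
      have hcomm : ⟪x - y, prox x - prox y⟫ = ⟪prox x - prox y, x - y⟫ := real_inner_comm _ _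
      nlinarith
    nlinarith [key, norm_nonneg ((x - prox x) - (y - prox y)), norm_nonneg (x - y)]
  -- Menv equals f x (prox x)
  have hMe : (fun x : E => ⨅ u : E, (g u + lam / 2 * ‖u - x‖ ^ 2)) = fun x => f x (prox x) := by
    funext x
    refine le_antisymm (ciInf_le ⟨f x (prox x), ?_⟩ (prox x)) (le_ciInf (hprox x))
    rintro r ⟨u, rfl⟩
    exact hprox x u
  -- gradient exists
  have upper : ∀ y z : E, f y (prox y) - f z (prox z) - ⟪G z, y - z⟫ ≤ lam/2 * ‖y - z‖^2 := by
    intro y z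
    have h1 : f y (prox y) ≤ f y (prox z) := hprox y (prox z)
    have e := norm_sub_sq_expand (prox z - z) (y - z)
    have he : prox z - y = (prox z - z) - (y - z) := by abel
    have hGz : ⟪G z, y - z⟫ = lam * ⟪z - prox z, y - z⟫ := real_inner_smul_left _ _ _
    have hneg : ⟪z - prox z, y - z⟫ = -⟪prox z - z, y - z⟫ := by
      have : z - prox z = -(prox z - z) := by abel
      rw [this, inner_neg_left]
    rw [hGz, hneg]
    have hfe : f y (prox z) - f z (prox z)
        = lam/2 * ‖prox z - y‖^2 - lam/2 * ‖prox z - z‖^2 := by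
      simp only [f]; ring
    have hkey : f y (prox z) - f z (prox z)
        = lam * (-⟪prox z - z, y - z⟫) + lam/2 * ‖y - z‖^2 := by
      rw [hfe, he, e]; ring
    have h2 : f y (prox y) - f z (prox z) ≤ lam * -⟪prox z - z, y - z⟫ + lam/2 * ‖y - z‖^2 := by
      rw [← hkey]; linarith
    linarith [h2]
  have habs : ∀ x y : E,
      |f y (prox y) - f x (prox x) - ⟪G x, y - x⟫| ≤ 3/2 * lam * ‖y - x‖^2 := by
    intro x y
    have hup := upper y x
    have hdown := upper x y
    -- rewrite hdown's inner products
    have h1 : ⟪G y, x - y⟫ = -⟪G y, y - x⟫ := by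
      have : x - y = -(y - x) := by abel
      rw [this, inner_neg_right]
    rw [h1] at hdown
    have hxy : ‖x - y‖ = ‖y - x‖ := norm_sub_rev _ _
    rw [hxy] at hdown
    -- |⟪G y - G x, y - x⟫| ≤ lam ‖y-x‖^2
    have hcs : |⟪G y - G x, y - x⟫| ≤ ‖G y - G x‖ * ‖y - x‖ := abs_real_inner_le_norm _ _
    have hGlip : ‖G y - G x‖ ≤ lam * ‖y - x‖ := by
      simp only [G]
      rw [← smul_sub, norm_smul, Real.norm_eq_abs, abs_of_pos hlam]
      exact mul_le_mul_of_nonneg_left (hlip y x) hlam.le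
    have hGb : |⟪G y - G x, y - x⟫| ≤ lam * ‖y - x‖^2 := by
      calc |⟪G y - G x, y - x⟫| ≤ ‖G y - G x‖ * ‖y - x‖ := hcs
        _ ≤ (lam * ‖y - x‖) * ‖y - x‖ :=
            mul_le_mul_of_nonneg_right hGlip (norm_nonneg _)
        _ = lam * ‖y - x‖^2 := by ring
    have hsplit : ⟪G y, y - x⟫ - ⟪G x, y - x⟫ = ⟪G y - G x, y - x⟫ := by
      rw [inner_sub_left]
    rw [abs_le]
    constructor
    · have := neg_abs_le ⟪G y - G x, y - x⟫
      nlinarith [hdown]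
    · nlinarith [hup, norm_nonneg (y - x), hlam.le]
  have hgrad : ∀ x : E, HasGradientAt (fun z : E => ⨅ u : E, (g u + lam / 2 * ‖u - z‖ ^ 2)) (G x) x := by
    intro x
    have hfun : (fun z : E => ⨅ u : E, (g u + lam / 2 * ‖u - z‖ ^ 2))
        = fun z => f z (prox z) := hMe
    rw [hfun, hasGradientAt_iff_isLittleO, Asymptotics.isLittleO_iff]
    intro c hc
    have hmem : Metric.ball x (c / (3/2*lam)) ∈ 𝓝 x :=
      Metric.ball_mem_nhds x (by positivity)
    filter_upwards [hmem] with y hy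
    rw [Metric.mem_ball, dist_eq_norm] at hy
    have h1 := habs x y
    rw [Real.norm_eq_abs]
    calc |f y (prox y) - f x (prox x) - ⟪G x, y - x⟫|
        ≤ 3/2 * lam * ‖y - x‖^2 := h1
      _ ≤ c * ‖y - x‖ := by
          have h2 : 3/2*lam*‖y-x‖ ≤ c := by
            rw [lt_div_iff₀ (by positivity)] at hy
            linarith
          nlinarith [h2, norm_nonneg (y - x)]
  constructor
  · intro x
    exact (hgrad x).hasFDerivAt.differentiableAt
  · intro x y
    rw [(hgrad x).gradient, (hgrad y).gradient]
    simp only [hG]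
    rw [← smul_sub, norm_smul, Real.norm_eq_abs, abs_of_pos hlam]
    exact mul_le_mul_of_nonneg_left (hlip x y) (le_of_lt hlam)
end

section
/- Let E be a finite-dimensional real inner product space, let λ > 0 and μ > 0, and let g : E → ℝ be continuous and μ-strongly convex. Then the Moreau envelope g̃^λ is (μλ/(μ+λ))-strongly convex. -/
open Set Metric

lemma sq_norm_combo' {E : Type*} [NormedAddCommGroup E] [InnerProductSpace ℝ E]
    (X Y : E) {a b : ℝ} (ha : 0 ≤ a) (hb : 0 ≤ b) (hab : a + b = 1) :
    ‖a • X + b • Y‖ ^ 2 ≤ a * ‖X‖ ^ 2 + b * ‖Y‖ ^ 2 := by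
  have h1 : ‖a • X + b • Y‖ ^ 2 =
      a^2 * ‖X‖^2 + 2*(a*b*inner ℝ X Y) + b^2*‖Y‖^2 := by
    rw [norm_add_sq_real, real_inner_smul_left, real_inner_smul_right, norm_smul, norm_smul]
    simp [Real.norm_eq_abs, mul_pow, sq_abs]
    ring
  have h2 : 0 ≤ a * b * ‖X - Y‖^2 := by positivity
  rw [norm_sub_sq_real] at h2
  nlinarith [h2]

/-- partial infimum of a jointly convex function is convex -/
lemma inf_convexOn {E F : Type*} [NormedAddCommGroup E] [InnerProductSpace ℝ E]
    [NormedAddCommGroup F] [InnerProductSpace ℝ F]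
    (Φ : E → F → ℝ)
    (hΦ : ConvexOn ℝ Set.univ (fun p : E × F => Φ p.1 p.2))
    (hbdd : ∀ x : F, BddBelow (Set.range fun u => Φ u x)) :
    ConvexOn ℝ Set.univ (fun x : F => ⨅ u : E, Φ u x) := by
  have : Nonempty E := ⟨0⟩
  refine ⟨convex_univ, ?_⟩
  intro x _ y _ a b ha hb hab
  refine le_of_forall_sub_le ?_
  intro ε hε
  rw [sub_le_iff_le_add]
  obtain ⟨u, hu⟩ := exists_lt_of_ciInf_lt
    (show (⨅ u : E, Φ u x) < (⨅ u : E, Φ u x) + ε by linarith)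
  obtain ⟨v, hv⟩ := exists_lt_of_ciInf_lt
    (show (⨅ u : E, Φ u y) < (⨅ u : E, Φ u y) + ε by linarith)
  have h1 : (⨅ w : E, Φ w (a • x + b • y)) ≤ Φ (a • u + b • v) (a • x + b • y) :=
    ciInf_le (hbdd _) _
  have h2 := hΦ.2 (Set.mem_univ (u, x)) (Set.mem_univ (v, y)) ha hb hab
  simp only [Prod.smul_mk, Prod.mk_add_mk, smul_eq_mul] at h2
  have h3 : a * Φ u x ≤ a * ((⨅ u : E, Φ u x) + ε) :=
    mul_le_mul_of_nonneg_left hu.le ha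
  have h4 : b * Φ v y ≤ b * ((⨅ u : E, Φ u y) + ε) :=
    mul_le_mul_of_nonneg_left hv.le hb
  simp only [smul_eq_mul]
  nlinarith [h1, h2, h3, h4]

lemma ciInf_add_const {E : Type*} [Nonempty E] (f : E → ℝ) (c : ℝ)
    (hb : BddBelow (Set.range f)) :
    (⨅ u : E, (f u + c)) = (⨅ u : E, f u) + c := by
  have hb' : BddBelow (Set.range fun u => f u + c) := by
    obtain ⟨m, hm⟩ := hb
    exact ⟨m + c, by rintro _ ⟨u, rfl⟩; have := hm ⟨u, rfl⟩; simpa using by linarith⟩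
  apply le_antisymm
  · have h : (⨅ u : E, (f u + c)) - c ≤ ⨅ u : E, f u :=
      le_ciInf fun u => by have := ciInf_le hb' u; linarith
    linarith
  · exact le_ciInf fun u => by have := ciInf_le hb u; linarith

/-- **Moreau envelope of a strongly convex function is strongly convex.**
Let `E` be a finite-dimensional real inner product space, `λ > 0`, `μ > 0`, and let
`g : E → ℝ` be continuous and `μ`-strongly convex (i.e. `x ↦ g x − (μ/2)‖x‖²` is
convex).  Then the Moreau envelope `g̃^λ` is `(μλ/(μ+λ))`-strongly convex. -/
theorem moreau_envelope_strongly_convex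
    {E : Type*} [NormedAddCommGroup E] [InnerProductSpace ℝ E] [FiniteDimensional ℝ E]
    (g : E → ℝ) (lam μ : ℝ) (hlam : 0 < lam) (hμ : 0 < μ)
    (hcont : Continuous g)
    (hsc : ConvexOn ℝ Set.univ (fun x : E => g x - μ / 2 * ‖x‖ ^ 2)) :
    ConvexOn ℝ Set.univ (fun x : E =>
      (⨅ u : E, (g u + lam / 2 * ‖u - x‖ ^ 2)) - (μ * lam / (μ + lam)) / 2 * ‖x‖ ^ 2) := by
  have : Nonempty E := ⟨0⟩
  set κ : ℝ := μ + lam with hκdef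
  have hκ : 0 < κ := by positivity
  set c : ℝ := lam / κ with hcdef
  set h : E → ℝ := fun u => g u - μ / 2 * ‖u‖ ^ 2 with hhdef
  have hhcont : Continuous h := by
    apply hcont.sub
    exact (continuous_const.mul ((continuous_norm).pow 2))
  -- key algebraic identity
  have key : ∀ u x : E, g u + lam / 2 * ‖u - x‖ ^ 2 =
      (h u + κ / 2 * ‖u - c • x‖ ^ 2) + (μ * lam / κ) / 2 * ‖x‖ ^ 2 := by
    intro u x
    have e1 : ‖u - x‖ ^ 2 = ‖u‖ ^ 2 - 2 * inner ℝ u x + ‖x‖ ^ 2 := norm_sub_sq_real u x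
    have e2 : ‖u - c • x‖ ^ 2 =
        ‖u‖ ^ 2 - 2 * (c * inner ℝ u x) + c ^ 2 * ‖x‖ ^ 2 := by
      rw [norm_sub_sq_real, real_inner_smul_right, norm_smul]
      simp [Real.norm_eq_abs, mul_pow, sq_abs]
    rw [e1, e2, hhdef, hcdef]
    field_simp
    ring
  clear_value h c κ
  -- bound on h on the unit ball
  obtain ⟨M0, hM0⟩ := (isCompact_closedBall (0 : E) 1).exists_bound_of_continuousOn
    hhcont.continuousOn
  set M : ℝ := max M0 0 with hMdef
  have hM : 0 ≤ M := le_max_right _ _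
  have hMb : ∀ z : E, ‖z‖ ≤ 1 → |h z| ≤ M := by
    intro z hz
    have := hM0 z (by simpa [Metric.mem_closedBall, dist_eq_norm] using hz)
    calc |h z| = ‖h z‖ := (Real.norm_eq_abs _).symm
    _ ≤ M0 := this
    _ ≤ M := le_max_left _ _
  -- linear lower bound for h
  have hlin : ∀ u : E, -(M * (1 + 2 * ‖u‖)) ≤ h u := by
    intro u
    rcases le_or_gt ‖u‖ 1 with hu | hu
    · have := hMb u hu
      have := abs_le.1 this
      nlinarith [norm_nonneg u]
    · set t : ℝ := ‖u‖ with htdef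
      have ht : 1 < t := hu
      have ht0 : 0 < t := by linarith
      set z : E := t⁻¹ • u with hzdef
      have hz1 : ‖z‖ = 1 := by
        rw [hzdef, norm_smul, Real.norm_eq_abs, abs_inv, abs_of_pos ht0]
        field_simp
        exact htdef.symm
      have hza := abs_le.1 (hMb z hz1.le)
      have h0a := abs_le.1 (hMb 0 (by simp))
      have ha1 : (0:ℝ) ≤ 1 - t⁻¹ := by
        nlinarith [mul_pos (inv_pos.2 ht0) (sub_pos.2 ht), mul_inv_cancel₀ ht0.ne']
      have hb1 : (0:ℝ) ≤ t⁻¹ := by positivity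
      have hab1 : (1 - t⁻¹) + t⁻¹ = 1 := by ring
      have hconv := hsc.2 (Set.mem_univ (0 : E)) (Set.mem_univ u) ha1 hb1 hab1
      simp only [smul_zero, zero_add, smul_eq_mul] at hconv
      have hz2 : h z ≤ (1 - t⁻¹) * h 0 + t⁻¹ * h u := by
        simpa [hzdef, hhdef] using hconv
      have htinv : 0 < t⁻¹ := by positivity
      -- multiply by t
      have : t * h z ≤ (t - 1) * h 0 + h u := by
        have := mul_le_mul_of_nonneg_left hz2 ht0.le
        calc t * h z ≤ t * ((1 - t⁻¹) * h 0 + t⁻¹ * h u) := this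
        _ = (t - 1) * h 0 + h u := by field_simp
      nlinarith [hza.1, h0a.1, h0a.2, ht0]
  -- boundedness below
  have hbdd : ∀ x : E, BddBelow (Set.range fun u => h u + κ / 2 * ‖u - c • x‖ ^ 2) := by
    intro x
    refine ⟨-M - 2 * M * ‖c • x‖ - 2 * M ^ 2 / κ, ?_⟩
    rintro _ ⟨u, rfl⟩
    show -M - 2 * M * ‖c • x‖ - 2 * M ^ 2 / κ ≤ h u + κ / 2 * ‖u - c • x‖ ^ 2
    have hq : (‖u‖ - ‖c • x‖) ^ 2 ≤ ‖u - c • x‖ ^ 2 := by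
      have h1 : |‖u‖ - ‖c • x‖| ≤ ‖u - c • x‖ := abs_norm_sub_norm_le u (c • x)
      calc (‖u‖ - ‖c • x‖) ^ 2 = |‖u‖ - ‖c • x‖| ^ 2 := (sq_abs _).symm
      _ ≤ ‖u - c • x‖ ^ 2 := pow_le_pow_left₀ (abs_nonneg _) h1 2
    have hl := hlin u
    have hdiv : 0 ≤ (κ ^ 2 * (‖u‖ - ‖c • x‖) ^ 2 - 4 * M * κ * (‖u‖ - ‖c • x‖)
        + 4 * M ^ 2) / (2 * κ) := by
      apply div_nonneg _ (by positivity)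
      nlinarith [sq_nonneg (κ * (‖u‖ - ‖c • x‖) - 2 * M)]
    have heq : (κ ^ 2 * (‖u‖ - ‖c • x‖) ^ 2 - 4 * M * κ * (‖u‖ - ‖c • x‖)
        + 4 * M ^ 2) / (2 * κ)
        = κ / 2 * (‖u‖ - ‖c • x‖) ^ 2 - 2 * M * (‖u‖ - ‖c • x‖) + 2 * M ^ 2 / κ := by
      field_simp
      ring
    rw [heq] at hdiv
    have h2 : κ / 2 * (‖u‖ - ‖c • x‖) ^ 2 ≤ κ / 2 * ‖u - c • x‖ ^ 2 :=
      mul_le_mul_of_nonneg_left hq (by positivity)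
    nlinarith [h2, hl, hdiv]
  -- joint convexity
  have hjoint : ConvexOn ℝ Set.univ
      (fun p : E × E => h p.1 + κ / 2 * ‖p.1 - c • p.2‖ ^ 2) := by
    refine ⟨convex_univ, ?_⟩
    intro p _ q _ a b ha hb hab
    have H1 := hsc.2 (Set.mem_univ p.1) (Set.mem_univ q.1) ha hb hab
    simp only [smul_eq_mul] at H1
    have e : (a • p + b • q).1 - c • (a • p + b • q).2
        = a • (p.1 - c • p.2) + b • (q.1 - c • q.2) := by
      simp only [Prod.fst_add, Prod.snd_add, Prod.smul_fst, Prod.smul_snd]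
      rw [smul_add, smul_sub, smul_sub, smul_smul, smul_smul, smul_smul, smul_smul,
        mul_comm c a, mul_comm c b]
      abel
    have hP1 : (a • p + b • q).1 = a • p.1 + b • q.1 := by
      simp only [Prod.fst_add, Prod.smul_fst]
    have H2 := sq_norm_combo' (p.1 - c • p.2) (q.1 - c • q.2) ha hb hab
    have H3 := mul_le_mul_of_nonneg_left H2 (show (0:ℝ) ≤ κ / 2 by positivity)
    have hh1 : h (a • p.1 + b • q.1) ≤ a * h p.1 + b * h q.1 := H1
    simp only [smul_eq_mul]
    rw [e, hP1]
    linarith [H3, hh1]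
  -- rewrite the target function
  have hfun : (fun x : E =>
      (⨅ u : E, (g u + lam / 2 * ‖u - x‖ ^ 2)) - (μ * lam / κ) / 2 * ‖x‖ ^ 2)
      = fun x : E => ⨅ u : E, (h u + κ / 2 * ‖u - c • x‖ ^ 2) := by
    funext x
    have e : (fun u : E => g u + lam / 2 * ‖u - x‖ ^ 2)
        = fun u : E => (h u + κ / 2 * ‖u - c • x‖ ^ 2) + (μ * lam / κ) / 2 * ‖x‖ ^ 2 :=
      funext fun u => key u x
    rw [e, ciInf_add_const _ _ (hbdd x)]
    ring
  rw [hfun]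
  exact inf_convexOn (fun u x => h u + κ / 2 * ‖u - c • x‖ ^ 2) hjoint hbdd
end

section
/- Let E be a finite-dimensional real inner product space and let g : E → ℝ be convex, differentiable, and L_g-smooth (L_g > 0). Then for all x, y ∈ E: ‖∇g(x) − ∇g(y)‖² ≤ 2 L_g ( g(x) − g(y) − ⟨∇g(y), x − y⟩ ). -/
open scoped RealInnerProductSpace

section aux

variable {E : Type*} [NormedAddCommGroup E] [InnerProductSpace ℝ E] [FiniteDimensional ℝ E]

private lemma lineDeriv_aux (g : E → ℝ) (hdiff : Differentiable ℝ g) (a d : E) (t : ℝ) :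
    HasDerivAt (fun s : ℝ => g (a + s • d)) ⟪gradient g (a + t • d), d⟫ t := by
  have h1 : HasDerivAt (fun s : ℝ => a + s • d) d t := by
    simpa using (hasDerivAt_id t).smul_const d
  have h2 : HasFDerivAt g (InnerProductSpace.toDual ℝ E (gradient g (a + t • d))) (a + t • d) :=
    (hasGradientAt_iff_hasFDerivAt).1 (hdiff (a + t • d)).hasGradientAt
  have h3 := h2.comp_hasDerivAt t h1
  rw [InnerProductSpace.toDual_apply_apply] at h3
  exact h3

/-- first-order convexity inequality -/
private lemma conv_grad_aux (g : E → ℝ) (hconv : ConvexOn ℝ Set.univ g)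
    (hdiff : Differentiable ℝ g) (a b : E) :
    ⟪gradient g a, b - a⟫ ≤ g b - g a := by
  set d := b - a with hd
  have hder := lineDeriv_aux g hdiff a d 0
  rw [zero_smul, add_zero] at hder
  have htend := hasDerivAt_iff_tendsto_slope.1 hder
  have htend' : Filter.Tendsto (slope (fun s : ℝ => g (a + s • d)) 0)
      (nhdsWithin 0 (Set.Ioi 0)) (nhds ⟪gradient g a, d⟫) :=
    htend.mono_left (nhdsWithin_mono 0 (fun x hx => ne_of_gt hx))
  refine le_of_tendsto htend' ?_
  filter_upwards [Ioc_mem_nhdsGT_of_mem (Set.left_mem_Ico.2 one_pos)] with t ht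
  obtain ⟨ht0, ht1⟩ := ht
  have heq : a + t • d = (1 - t) • a + t • b := by rw [hd]; module
  have hconvpt : g (a + t • d) ≤ (1 - t) * g a + t * g b := by
    rw [heq]
    simpa [smul_eq_mul] using hconv.2 (Set.mem_univ a) (Set.mem_univ b)
      (by linarith : (0:ℝ) ≤ 1 - t) (le_of_lt ht0) (by ring)
  rw [slope_def_field, div_le_iff₀ (by simpa using ht0 : (0:ℝ) < t - 0)]
  simp only [zero_smul, add_zero]
  nlinarith [hconvpt]

/-- descent lemma -/
private lemma descent_aux (g : E → ℝ) (Lg : ℝ) (hLg : 0 < Lg)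
    (hdiff : Differentiable ℝ g)
    (hsmooth : ∀ x y : E, ‖gradient g x - gradient g y‖ ≤ Lg * ‖x - y‖) (a b : E) :
    g b ≤ g a + ⟪gradient g a, b - a⟫ + Lg / 2 * ‖b - a‖ ^ 2 := by
  set d := b - a with hd
  set ψ' : ℝ → ℝ := fun t => ⟪gradient g (a + t • d), d⟫ with hψ'
  have hder : ∀ t ∈ Set.uIcc (0:ℝ) 1, HasDerivAt (fun s : ℝ => g (a + s • d)) (ψ' t) t :=
    fun t _ => lineDeriv_aux g hdiff a d t
  have hgradcont : Continuous (gradient g) := by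
    have : LipschitzWith (Real.toNNReal Lg) (gradient g) := by
      refine LipschitzWith.of_dist_le_mul fun x y => ?_
      rw [dist_eq_norm]
      calc ‖gradient g x - gradient g y‖ ≤ Lg * ‖x - y‖ := hsmooth x y
        _ ≤ Real.toNNReal Lg * dist x y := by
            rw [dist_eq_norm, Real.coe_toNNReal _ hLg.le]
    exact this.continuous
  have hψ'cont : Continuous ψ' := by
    apply Continuous.inner
    · exact hgradcont.comp (by fun_prop)
    · exact continuous_const
  have hcont : ContinuousOn ψ' (Set.uIcc (0:ℝ) 1) := hψ'cont.continuousOn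
  have hint : IntervalIntegrable ψ' MeasureTheory.volume 0 1 :=
    hcont.intervalIntegrable
  have hftc : ∫ t in (0:ℝ)..1, ψ' t = g (a + (1:ℝ) • d) - g (a + (0:ℝ) • d) :=
    intervalIntegral.integral_eq_sub_of_hasDerivAt hder hint
  have hbound : ∀ t ∈ Set.Icc (0:ℝ) 1, ψ' t ≤ ψ' 0 + Lg * t * ‖d‖ ^ 2 := by
    intro t ht
    have h1 : ψ' t - ψ' 0 = ⟪gradient g (a + t • d) - gradient g a, d⟫ := by
      simp [hψ', inner_sub_left]
    have h2 : ⟪gradient g (a + t • d) - gradient g a, d⟫ ≤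
        ‖gradient g (a + t • d) - gradient g a‖ * ‖d‖ :=
      real_inner_le_norm _ _
    have h3 : ‖gradient g (a + t • d) - gradient g a‖ ≤ Lg * (t * ‖d‖) := by
      have := hsmooth (a + t • d) a
      simpa [norm_smul, abs_of_nonneg ht.1, mul_assoc] using this
    nlinarith [norm_nonneg d, norm_nonneg (gradient g (a + t • d) - gradient g a), ht.1]
  have hc2 : Continuous (fun t : ℝ => Lg * t * ‖d‖ ^ 2) := by fun_prop
  have hmono : ∫ t in (0:ℝ)..1, ψ' t ≤ ∫ t in (0:ℝ)..1, (ψ' 0 + Lg * t * ‖d‖ ^ 2) := by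
    apply intervalIntegral.integral_mono_on zero_le_one hint
    · exact (continuous_const.add hc2).intervalIntegrable 0 1
    · exact hbound
  have hval : ∫ t in (0:ℝ)..1, (ψ' 0 + Lg * t * ‖d‖ ^ 2) = ψ' 0 + Lg / 2 * ‖d‖ ^ 2 := by
    rw [intervalIntegral.integral_add (intervalIntegrable_const) (hc2.intervalIntegrable 0 1)]
    simp only [intervalIntegral.integral_const, smul_eq_mul, mul_one]
    have he : (fun t : ℝ => Lg * t * ‖d‖ ^ 2) = fun t : ℝ => (Lg * ‖d‖ ^ 2) * t := by
      funext t; ring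
    rw [he, intervalIntegral.integral_const_mul, integral_id]
    ring
  have hψ'0 : ψ' 0 = ⟪gradient g a, d⟫ := by simp [hψ']
  have : g (a + (1:ℝ) • d) - g (a + (0:ℝ) • d) ≤ ψ' 0 + Lg / 2 * ‖d‖ ^ 2 := by
    rw [← hftc, ← hval]; exact hmono
  simp only [one_smul, zero_smul, add_zero] at this
  have hab : a + d = b := by rw [hd]; abel
  rw [hab] at this
  rw [hψ'0] at this
  linarith

end aux

/-- **Cocoercivity-type inequality for convex `L`-smooth functions.**
Let `E` be a finite-dimensional real inner product space and `g : E → ℝ` convex,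
differentiable, and `L_g`-smooth (`L_g > 0`).  Then for all `x, y`:
`‖∇g(x) − ∇g(y)‖² ≤ 2 L_g (g(x) − g(y) − ⟪∇g(y), x − y⟫)`. -/
theorem convex_smooth_grad_sq_le
    {E : Type*} [NormedAddCommGroup E] [InnerProductSpace ℝ E] [FiniteDimensional ℝ E]
    (g : E → ℝ) (Lg : ℝ) (hLg : 0 < Lg)
    (hconv : ConvexOn ℝ Set.univ g) (hdiff : Differentiable ℝ g)
    (hsmooth : ∀ x y : E, ‖gradient g x - gradient g y‖ ≤ Lg * ‖x - y‖) :
    ∀ x y : E,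
      ‖gradient g x - gradient g y‖ ^ 2
        ≤ 2 * Lg * (g x - g y - ⟪gradient g y, x - y⟫) := by
  intro x y
  set u := gradient g y with hu
  set v := gradient g x with hv
  set z : E := x - (Lg⁻¹) • (v - u) with hz
  -- descent lemma at x toward z
  have hdes := descent_aux g Lg hLg hdiff hsmooth x z
  have hzx : z - x = (-Lg⁻¹) • (v - u) := by rw [hz]; module
  -- convexity: g y + ⟪u, z - y⟫ ≤ g z
  have hcg := conv_grad_aux g hconv hdiff y z
  -- also convexity at y toward x not needed
  have hinner1 : ⟪v, z - x⟫ = -Lg⁻¹ * ⟪v, v - u⟫ := by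
    rw [hzx, real_inner_smul_right]
  have hnorm1 : ‖z - x‖ ^ 2 = Lg⁻¹ ^ 2 * ‖v - u‖ ^ 2 := by
    rw [hzx, norm_smul]
    rw [Real.norm_eq_abs, abs_neg, abs_of_nonneg (inv_nonneg.2 hLg.le), mul_pow]
  have hinner2 : ⟪u, z - y⟫ = ⟪u, x - y⟫ - Lg⁻¹ * ⟪u, v - u⟫ := by
    have hzy : z - y = (x - y) + (-Lg⁻¹) • (v - u) := by rw [hz]; module
    rw [hzy, inner_add_right, real_inner_smul_right]; ring
  -- combine: g z ≤ g x + ⟪v, z-x⟫ + Lg/2 ‖z-x‖²  and g y + ⟪u, z-y⟫ ≤ g z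
  have key : g y + ⟪u, x - y⟫ - Lg⁻¹ * ⟪u, v - u⟫ ≤
      g x - Lg⁻¹ * ⟪v, v - u⟫ + Lg / 2 * (Lg⁻¹ ^ 2 * ‖v - u‖ ^ 2) := by
    rw [hinner2] at hcg
    rw [hinner1, hnorm1] at hdes
    linarith
  have hvu : ⟪v, v - u⟫ - ⟪u, v - u⟫ = ‖v - u‖ ^ 2 := by
    rw [← inner_sub_left, real_inner_self_eq_norm_sq]
  have hLgne : Lg ≠ 0 := ne_of_gt hLg
  have h1 : Lg / 2 * (Lg⁻¹ ^ 2 * ‖v - u‖ ^ 2) = Lg⁻¹ / 2 * ‖v - u‖ ^ 2 := by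
    field_simp
  rw [h1] at key
  have e : Lg⁻¹ * ⟪v, v - u⟫ - Lg⁻¹ * ⟪u, v - u⟫ = Lg⁻¹ * ‖v - u‖ ^ 2 := by
    rw [← mul_sub, hvu]
  have key2 : Lg⁻¹ / 2 * ‖v - u‖ ^ 2 ≤ g x - g y - ⟪u, x - y⟫ := by linarith
  have : ‖v - u‖ ^ 2 = 2 * Lg * (Lg⁻¹ / 2 * ‖v - u‖ ^ 2) := by field_simp
  rw [this]
  have h2Lg : (0:ℝ) ≤ 2 * Lg := by linarith
  exact mul_le_mul_of_nonneg_left key2 h2Lg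
end

section
/- In the multi-tier setting, suppose every device loss f_{i,j} : E → ℝ is continuous and μ_f-strongly convex with μ_f > 0, and let λ, γ > 0. Then the server objective φ(x) = (1/M) ∑_{i=1}^{M} F̃^γ_i(x) is μ̃-strongly convex with μ̃ = λγμ_f / (λμ_f + γμ_f + λγ). -/
open Set Metric

section AuxLemmas

variable {E : Type*} [NormedAddCommGroup E] [InnerProductSpace ℝ E]

private lemma normsq_convex_combo (x y : E) {a b : ℝ} (ha : 0 ≤ a) (hb : 0 ≤ b)
    (hab : a + b = 1) : ‖a • x + b • y‖ ^ 2 ≤ a * ‖x‖ ^ 2 + b * ‖y‖ ^ 2 := by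
  have h1 : ‖a • x + b • y‖ ^ 2
      = ‖a • x‖ ^ 2 + 2 * inner ℝ (a • x) (b • y) + ‖b • y‖ ^ 2 := norm_add_sq_real _ _
  have h2 : (inner ℝ (a • x) (b • y) : ℝ) = a * b * inner ℝ x y := by
    rw [real_inner_smul_left, real_inner_smul_right]; ring
  have h3 : ‖a • x‖ = a * ‖x‖ := by rw [norm_smul, Real.norm_of_nonneg ha]
  have h4 : ‖b • y‖ = b * ‖y‖ := by rw [norm_smul, Real.norm_of_nonneg hb]
  have h5 : 2 * (inner ℝ x y : ℝ) ≤ ‖x‖ ^ 2 + ‖y‖ ^ 2 := by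
    have h6 := norm_sub_sq_real x y
    nlinarith [sq_nonneg ‖x - y‖]
  rw [h1, h2, h3, h4]
  nlinarith [mul_le_mul_of_nonneg_left h5 (mul_nonneg ha hb)]

private lemma iInf_add_const {ι : Sort*} [Nonempty ι] (u : ι → ℝ)
    (h : BddBelow (Set.range u)) (c : ℝ) : (⨅ i, (u i + c)) = (⨅ i, u i) + c := by
  obtain ⟨L, hL⟩ := h
  have h' : BddBelow (Set.range fun i => u i + c) := by
    refine ⟨L + c, ?_⟩
    rintro x ⟨i, rfl⟩
    exact add_le_add_left (hL ⟨i, rfl⟩) c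
  apply le_antisymm
  · rw [← sub_le_iff_le_add]
    refine le_ciInf fun i => ?_
    rw [sub_le_iff_le_add]
    exact ciInf_le h' i
  · exact le_ciInf fun i => add_le_add_left (ciInf_le ⟨L, hL⟩ i) c

private lemma convexOn_fin_sum {n : ℕ} (f : Fin n → E → ℝ)
    (h : ∀ j, ConvexOn ℝ Set.univ (f j)) :
    ConvexOn ℝ Set.univ (fun x => ∑ j, f j x) := by
  classical
  have key : ∀ t : Finset (Fin n), ConvexOn ℝ Set.univ (fun x => ∑ j ∈ t, f j x) := by
    intro t
    induction t using Finset.induction with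
    | empty => simpa using convexOn_const (0 : ℝ) convex_univ
    | insert _ _ hnot ih =>
        simp_rw [Finset.sum_insert hnot]
        exact (h _).add ih
  exact key Finset.univ

set_option maxHeartbeats 1000000 in
private lemma moreau_key [FiniteDimensional ℝ E]
    (φ : E → ℝ) (μ κ : ℝ) (hμ : 0 < μ) (hκ : 0 < κ)
    (hcont : Continuous φ)
    (hsc : ConvexOn ℝ Set.univ (fun x : E => φ x - μ / 2 * ‖x‖ ^ 2)) :
    Continuous (fun w : E => ⨅ θ : E, (φ θ + κ / 2 * ‖θ - w‖ ^ 2)) ∧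
    ConvexOn ℝ Set.univ
      (fun w : E => (⨅ θ : E, (φ θ + κ / 2 * ‖θ - w‖ ^ 2))
        - (κ * μ / (κ + μ)) / 2 * ‖w‖ ^ 2) := by
  set g : E → ℝ := fun x => φ x - μ / 2 * ‖x‖ ^ 2 with hgdef
  have hgc : Continuous g := by
    have : Continuous fun x : E => μ / 2 * ‖x‖ ^ 2 := by fun_prop
    exact hcont.sub this
  set s : ℝ := κ + μ with hsdef
  have hs : 0 < s := by positivity
  set c : ℝ := κ / s with hcdef
  have hc0 : 0 ≤ c := by positivity
  -- lower bound / BddBelow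
  have hbdd : ∀ v : E, BddBelow (Set.range fun θ : E => g θ + s / 2 * ‖θ - v‖ ^ 2) := by
    intro v
    obtain ⟨K, hK⟩ := (isCompact_closedBall v 1).exists_bound_of_continuousOn hgc.continuousOn
    have hK0 : 0 ≤ K := le_trans (norm_nonneg _) (hK v (mem_closedBall_self zero_le_one))
    have hglb : ∀ θ : E, -(2 * K) * (‖θ - v‖ + 1) ≤ g θ := by
      intro θ
      rcases le_or_gt ‖θ - v‖ 1 with hr | hr
      · have h1 : ‖g θ‖ ≤ K := hK θ (by rwa [mem_closedBall, dist_eq_norm])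
        have h1a : |g θ| ≤ K := by rwa [Real.norm_eq_abs] at h1
        have h2 := abs_le.mp h1a
        nlinarith [norm_nonneg (θ - v)]
      · set r := ‖θ - v‖ with hrdef
        have hr0 : 0 < r := lt_trans one_pos hr
        set p : E := v + r⁻¹ • (θ - v) with hpdef
        have hpB : p ∈ closedBall v 1 := by
          rw [mem_closedBall, dist_eq_norm]
          have : p - v = r⁻¹ • (θ - v) := by rw [hpdef]; abel
          rw [this, norm_smul, Real.norm_of_nonneg (by positivity : (0:ℝ) ≤ r⁻¹), ← hrdef,
            inv_mul_cancel₀ hr0.ne']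
        have hcomb : p = (1 - r⁻¹) • v + r⁻¹ • θ := by
          rw [hpdef]; module
        have hri : r * r⁻¹ = 1 := mul_inv_cancel₀ hr0.ne'
        have hia : 0 ≤ 1 - r⁻¹ := by
          have : r⁻¹ ≤ 1 := by
            rw [inv_le_one_iff₀]; right; exact hr.le
          linarith
        have hib : 0 ≤ r⁻¹ := by positivity
        have hcv := hsc.2 (mem_univ v) (mem_univ θ) hia hib (by ring)
        simp only [smul_eq_mul, ← hgdef] at hcv
        rw [← hcomb] at hcv
        -- hcv : g p ≤ (1 - r⁻¹) * g v + r⁻¹ * g θ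
        have h1 : ‖g v‖ ≤ K := hK v (mem_closedBall_self zero_le_one)
        have h2 : ‖g p‖ ≤ K := hK p hpB
        have h1a : |g v| ≤ K := by rwa [Real.norm_eq_abs] at h1
        have h2a : |g p| ≤ K := by rwa [Real.norm_eq_abs] at h2
        have h1' := abs_le.mp h1a
        have h2' := abs_le.mp h2a
        have hmul := mul_le_mul_of_nonneg_left hcv hr0.le
        have e : r * ((1 - r⁻¹) * g v + r⁻¹ * g θ) = (r - 1) * g v + g θ := by
          field_simp
        rw [e] at hmul
        -- hmul : r * g p ≤ (r - 1) * g v + g θ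
        have p1 : 0 ≤ r * (g p + K) := mul_nonneg hr0.le (by linarith [h2'.1])
        have p2 : 0 ≤ (r - 1) * (K - g v) := mul_nonneg (by linarith) (by linarith [h1'.2])
        nlinarith
    refine ⟨-(2 * K ^ 2 / s) - 2 * K, ?_⟩
    rintro x ⟨θ, rfl⟩
    dsimp only
    have h0 : (0:ℝ) ≤ (s * ‖θ - v‖ - 2 * K) ^ 2 / (2 * s) := by positivity
    have e : (s * ‖θ - v‖ - 2 * K) ^ 2 / (2 * s)
        = s / 2 * ‖θ - v‖ ^ 2 - 2 * K * ‖θ - v‖ + 2 * K ^ 2 / s := by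
      field_simp; ring
    rw [e] at h0
    have hlb := hglb θ
    clear_value g s c
    nlinarith [norm_nonneg (θ - v)]
  -- pointwise completing-the-square identity
  have hid : ∀ w θ : E, φ θ + κ / 2 * ‖θ - w‖ ^ 2
      = (g θ + s / 2 * ‖θ - c • w‖ ^ 2) + (κ * μ / s) / 2 * ‖w‖ ^ 2 := by
    intro w θ
    have e1 : ‖θ - w‖ ^ 2 = ‖θ‖ ^ 2 - 2 * inner ℝ θ w + ‖w‖ ^ 2 := norm_sub_sq_real θ w
    have e2 : ‖θ - c • w‖ ^ 2 = ‖θ‖ ^ 2 - 2 * (c * inner ℝ θ w) + c ^ 2 * ‖w‖ ^ 2 := by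
      rw [norm_sub_sq_real, real_inner_smul_right, norm_smul,
        Real.norm_of_nonneg hc0, mul_pow]
    have e3 : φ θ = g θ + μ / 2 * ‖θ‖ ^ 2 := by rw [hgdef]; ring
    rw [e1, e2, e3, hcdef, hsdef]
    have hsm : κ + μ ≠ 0 := by positivity
    field_simp
    ring
  set h : E → ℝ := fun w => ⨅ θ : E, (g θ + s / 2 * ‖θ - c • w‖ ^ 2) with hhdef
  have henv : ∀ w : E, (⨅ θ : E, (φ θ + κ / 2 * ‖θ - w‖ ^ 2))
      = h w + (κ * μ / s) / 2 * ‖w‖ ^ 2 := by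
    intro w
    rw [hhdef]
    calc (⨅ θ : E, (φ θ + κ / 2 * ‖θ - w‖ ^ 2))
        = ⨅ θ : E, ((g θ + s / 2 * ‖θ - c • w‖ ^ 2) + (κ * μ / s) / 2 * ‖w‖ ^ 2) :=
          iInf_congr fun θ => hid w θ
      _ = (⨅ θ : E, (g θ + s / 2 * ‖θ - c • w‖ ^ 2)) + (κ * μ / s) / 2 * ‖w‖ ^ 2 :=
          iInf_add_const _ (hbdd (c • w)) _
  have hconv : ConvexOn ℝ Set.univ h := by
    refine ⟨convex_univ, fun w1 _ w2 _ a b ha hb hab => ?_⟩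
    simp only [smul_eq_mul]
    rcases eq_or_lt_of_le ha with ha0 | ha'
    · have hb1 : b = 1 := by linarith
      rw [← ha0, hb1]; simp
    rcases eq_or_lt_of_le hb with hb0 | hb'
    · have ha1 : a = 1 := by linarith
      rw [← hb0, ha1]; simp
    have e1 : a * h w1 = ⨅ θ : E, a * (g θ + s / 2 * ‖θ - c • w1‖ ^ 2) :=
      Real.mul_iInf_of_nonneg ha _
    have e2 : b * h w2 = ⨅ θ : E, b * (g θ + s / 2 * ‖θ - c • w2‖ ^ 2) :=
      Real.mul_iInf_of_nonneg hb _
    rw [e1, e2]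
    refine le_ciInf_add_ciInf fun θ1 θ2 => ?_
    have step1 : h (a • w1 + b • w2)
        ≤ g (a • θ1 + b • θ2) + s / 2 * ‖(a • θ1 + b • θ2) - c • (a • w1 + b • w2)‖ ^ 2 :=
      ciInf_le (hbdd (c • (a • w1 + b • w2))) (a • θ1 + b • θ2)
    have hg' : g (a • θ1 + b • θ2) ≤ a * g θ1 + b * g θ2 := by
      have := hsc.2 (mem_univ θ1) (mem_univ θ2) ha hb hab
      simpa only [smul_eq_mul, ← hgdef] using this
    have hnorm : ‖(a • θ1 + b • θ2) - c • (a • w1 + b • w2)‖ ^ 2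
        ≤ a * ‖θ1 - c • w1‖ ^ 2 + b * ‖θ2 - c • w2‖ ^ 2 := by
      have e : (a • θ1 + b • θ2) - c • (a • w1 + b • w2)
          = a • (θ1 - c • w1) + b • (θ2 - c • w2) := by module
      rw [e]; exact normsq_convex_combo _ _ ha hb hab
    have hs2 : (0:ℝ) ≤ s / 2 := by positivity
    have hfin := mul_le_mul_of_nonneg_left hnorm hs2
    have erw : s / 2 * (a * ‖θ1 - c • w1‖ ^ 2 + b * ‖θ2 - c • w2‖ ^ 2)
        = a * (s / 2 * ‖θ1 - c • w1‖ ^ 2) + b * (s / 2 * ‖θ2 - c • w2‖ ^ 2) := by ring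
    rw [erw] at hfin
    clear_value g s c h
    linarith [step1, hg', hfin]
  constructor
  · have hhc : Continuous h := by
      have := hconv.continuousOn isOpen_univ
      rwa [continuousOn_univ] at this
    have heq : (fun w : E => ⨅ θ : E, (φ θ + κ / 2 * ‖θ - w‖ ^ 2))
        = fun w => h w + (κ * μ / s) / 2 * ‖w‖ ^ 2 := funext henv
    rw [heq]
    exact hhc.add (by fun_prop)
  · have heq : (fun w : E => (⨅ θ : E, (φ θ + κ / 2 * ‖θ - w‖ ^ 2))
        - (κ * μ / (κ + μ)) / 2 * ‖w‖ ^ 2) = h := by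
      funext w
      rw [henv w, ← hsdef]
      ring
    rw [heq]
    exact hconv

end AuxLemmas

/-- **Strong convexity of the server objective.**
In the multi-tier setting with device losses `f i j : E → ℝ` (`M ≥ 1` teams,
team `i` having `N i ≥ 1` devices) that are continuous and `μ_f`-strongly convex,
and parameters `λ, γ > 0`, the server objective
`φ(x) = (1/M) ∑ᵢ F̃ᵢ^γ(x)`, where
`F̃ᵢ^γ(x) = ⨅ w, (Fᵢ(w) + (γ/2)‖w − x‖²)`,
`Fᵢ(w) = (1/Nᵢ) ∑ⱼ ⨅ θ, (f i j θ + (λ/2)‖θ − w‖²)`,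
is `μ̃`-strongly convex with `μ̃ = λγμ_f/(λμ_f + γμ_f + λγ)`. -/
theorem server_objective_strongly_convex
    {E : Type*} [NormedAddCommGroup E] [InnerProductSpace ℝ E] [FiniteDimensional ℝ E]
    {M : ℕ} (hM : 1 ≤ M) {N : Fin M → ℕ} (hN : ∀ i, 1 ≤ N i)
    (f : (i : Fin M) → Fin (N i) → E → ℝ)
    (μf lam gam : ℝ) (hμf : 0 < μf) (hlam : 0 < lam) (hgam : 0 < gam)
    (hcont : ∀ i j, Continuous (f i j))
    (hsc : ∀ i j, ConvexOn ℝ Set.univ (fun x : E => f i j x - μf / 2 * ‖x‖ ^ 2)) :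
    ConvexOn ℝ Set.univ (fun x : E =>
      (1 / (M : ℝ)) * ∑ i : Fin M,
        (⨅ w : E,
          (((1 / (N i : ℝ)) * ∑ j : Fin (N i), ⨅ θ : E, (f i j θ + lam / 2 * ‖θ - w‖ ^ 2))
            + gam / 2 * ‖w - x‖ ^ 2))
      - (lam * gam * μf / (lam * μf + gam * μf + lam * gam)) / 2 * ‖x‖ ^ 2) := by
  have hM0 : (0:ℝ) < (M : ℝ) := by exact_mod_cast hM
  set μ1 : ℝ := lam * μf / (lam + μf) with hμ1def
  have hμ1 : 0 < μ1 := by positivity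
  -- device level
  have hdev : ∀ i j, Continuous (fun w : E => ⨅ θ : E, (f i j θ + lam / 2 * ‖θ - w‖ ^ 2)) ∧
      ConvexOn ℝ Set.univ (fun w : E =>
        (⨅ θ : E, (f i j θ + lam / 2 * ‖θ - w‖ ^ 2)) - μ1 / 2 * ‖w‖ ^ 2) := by
    intro i j
    have := moreau_key (f i j) μf lam hμf hlam (hcont i j) (hsc i j)
    rwa [← hμ1def] at this
  -- team objective
  set F : (i : Fin M) → E → ℝ := fun i w =>
    (1 / (N i : ℝ)) * ∑ j : Fin (N i), ⨅ θ : E, (f i j θ + lam / 2 * ‖θ - w‖ ^ 2) with hFdef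
  have hFcont : ∀ i, Continuous (F i) := by
    intro i
    exact continuous_const.mul (continuous_finset_sum _ fun j _ => (hdev i j).1)
  have hFsc : ∀ i, ConvexOn ℝ Set.univ (fun w : E => F i w - μ1 / 2 * ‖w‖ ^ 2) := by
    intro i
    have hNpos : (0:ℝ) < (N i : ℝ) := by exact_mod_cast hN i
    have heq : (fun w : E => F i w - μ1 / 2 * ‖w‖ ^ 2)
        = fun w : E => (1 / (N i : ℝ)) * ∑ j : Fin (N i),
            ((⨅ θ : E, (f i j θ + lam / 2 * ‖θ - w‖ ^ 2)) - μ1 / 2 * ‖w‖ ^ 2) := by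
      funext w
      rw [hFdef]
      simp only [Finset.sum_sub_distrib, Finset.sum_const, Finset.card_univ,
        Fintype.card_fin, nsmul_eq_mul]
      field_simp
      simp only [mul_comm]
    rw [heq]
    have hsum := convexOn_fin_sum _ (fun j => (hdev i j).2)
    have := hsum.smul (c := 1 / (N i : ℝ)) (by positivity)
    simpa only [smul_eq_mul] using this
  -- team level envelopes
  have hteam : ∀ i, ConvexOn ℝ Set.univ (fun x : E =>
      (⨅ w : E, (F i w + gam / 2 * ‖w - x‖ ^ 2))
        - (gam * μ1 / (gam + μ1)) / 2 * ‖x‖ ^ 2) :=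
    fun i => (moreau_key (F i) μ1 gam hμ1 hgam (hFcont i) (hFsc i)).2
  have hmod : gam * μ1 / (gam + μ1)
      = lam * gam * μf / (lam * μf + gam * μf + lam * gam) := by
    rw [hμ1def]
    have h1 : lam + μf ≠ 0 := by positivity
    have h2 : lam * μf + gam * μf + lam * gam ≠ 0 := by positivity
    field_simp
    ring
  rw [hmod] at hteam
  set μt : ℝ := lam * gam * μf / (lam * μf + gam * μf + lam * gam) with hμtdef
  have heq : (fun x : E =>
      (1 / (M : ℝ)) * ∑ i : Fin M,
        (⨅ w : E, (F i w + gam / 2 * ‖w - x‖ ^ 2)) - μt / 2 * ‖x‖ ^ 2)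
      = fun x : E => (1 / (M : ℝ)) * ∑ i : Fin M,
        ((⨅ w : E, (F i w + gam / 2 * ‖w - x‖ ^ 2)) - μt / 2 * ‖x‖ ^ 2) := by
    funext x
    simp only [Finset.sum_sub_distrib, Finset.sum_const, Finset.card_univ,
      Fintype.card_fin, nsmul_eq_mul]
    field_simp
    simp only [mul_comm]
  rw [hFdef] at heq
  rw [heq]
  have hsum := convexOn_fin_sum _ (fun i => hteam i)
  have := hsum.smul (c := 1 / (M : ℝ)) (by positivity)
  simpa only [smul_eq_mul] using this
end

section
/- Let E be a finite-dimensional real inner product space and let φ : E → ℝ be differentiable, μ-strongly convex (μ > 0), and L-smooth (L > 0), with global minimizer x*. Let 0 < β ≤ 1/(2L), let g ∈ E be arbitrary, and set x⁺ = x − βg for some x ∈ E. Then ‖x⁺ − x*‖² ≤ (1 − βμ/2) ‖x − x*‖² + 2β(β + 1/μ) ‖g − ∇φ(x)‖². -/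
open Set InnerProductSpace

local notation "⟪" x ", " y "⟫" => @inner ℝ _ _ x y

section Aux

variable {E : Type*} [NormedAddCommGroup E] [InnerProductSpace ℝ E] [CompleteSpace E]

lemma aux_fderiv_eq (f : E → ℝ) (hf : Differentiable ℝ f) (z : E) :
    fderiv ℝ f z = toDual ℝ E (gradient f z) :=
  ((hasGradientAt_iff_hasFDerivAt.mp (hf z).hasGradientAt)).fderiv

lemma aux_fderiv_apply (f : E → ℝ) (hf : Differentiable ℝ f) (z v : E) :
    fderiv ℝ f z v = ⟪gradient f z, v⟫ := by
  rw [aux_fderiv_eq f hf z]; simp [InnerProductSpace.toDual_apply_apply]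

lemma aux_first_order (f : E → ℝ) (hf : Differentiable ℝ f)
    (hc : ConvexOn ℝ Set.univ f) (a b : E) :
    f a + ⟪gradient f a, b - a⟫ ≤ f b := by
  set q : ℝ → ℝ := fun t => f (a + t • (b - a)) with hqdef
  have hline : ∀ t : ℝ, HasDerivAt (fun s : ℝ => a + s • (b - a)) (b - a) t := by
    intro t
    simpa using ((hasDerivAt_id t).smul_const (b - a)).const_add a
  have hq0 : HasDerivAt q (⟪gradient f a, b - a⟫) 0 := by
    have h1 := (hf (a + (0 : ℝ) • (b - a))).hasFDerivAt.comp_hasDerivAt 0 (hline 0)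
    simp only [zero_smul, add_zero] at h1
    rwa [aux_fderiv_apply f hf a (b - a)] at h1
  have hqc : ConvexOn ℝ Set.univ q := by
    have h2 := hc.comp_affineMap (AffineMap.lineMap a b : ℝ →ᵃ[ℝ] E)
    have h3 : (f ∘ (AffineMap.lineMap a b : ℝ →ᵃ[ℝ] E)) = q := by
      funext t
      simp [hqdef, AffineMap.lineMap_apply, add_comm]
    rw [h3] at h2
    simpa using h2
  have hs := hqc.le_slope_of_hasDerivAt (mem_univ (0 : ℝ)) (mem_univ (1 : ℝ)) one_pos hq0
  rw [slope_def_field] at hs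
  have hq1 : q 1 = f b := by simp [hqdef]
  have hq0' : q 0 = f a := by simp [hqdef]
  rw [hq1, hq0'] at hs
  have : ⟪gradient f a, b - a⟫ ≤ f b - f a := by
    simpa using hs
  linarith

lemma aux_descent (f : E → ℝ) (L : ℝ) (hL : 0 ≤ L) (hf : Differentiable ℝ f)
    (hsm : ∀ a b : E, ‖gradient f a - gradient f b‖ ≤ L * ‖a - b‖) (a b : E) :
    f b ≤ f a + ⟪gradient f a, b - a⟫ + L * ‖b - a‖ ^ 2 := by
  have hbound : ∀ z ∈ segment ℝ a b, ‖fderiv ℝ f z - fderiv ℝ f a‖ ≤ L * ‖b - a‖ := by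
    intro z hz
    rw [aux_fderiv_eq f hf, aux_fderiv_eq f hf, ← map_sub, (toDual ℝ E).norm_map]
    refine (hsm z a).trans ?_
    have hza : ‖z - a‖ ≤ ‖b - a‖ := by
      rw [segment_eq_image'] at hz
      obtain ⟨θ, hθ, rfl⟩ := hz
      simp only [add_sub_cancel_left, norm_smul, Real.norm_eq_abs,
        abs_of_nonneg hθ.1]
      calc θ * ‖b - a‖ ≤ 1 * ‖b - a‖ :=
            mul_le_mul_of_nonneg_right hθ.2 (norm_nonneg _)
        _ = ‖b - a‖ := one_mul _
    exact mul_le_mul_of_nonneg_left hza hL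
  have key := Convex.norm_image_sub_le_of_norm_fderiv_le'
      (fun z _ => hf z) hbound (convex_segment a b)
      (left_mem_segment ℝ a b) (right_mem_segment ℝ a b)
  rw [aux_fderiv_apply f hf a (b - a)] at key
  rw [Real.norm_eq_abs] at key
  have h1 := le_abs_self (f b - f a - ⟪gradient f a, b - a⟫)
  have h2 : L * ‖b - a‖ * ‖b - a‖ = L * ‖b - a‖ ^ 2 := by ring
  linarith

lemma aux_gap (f : E → ℝ) (L : ℝ) (hL : 0 < L) (hf : Differentiable ℝ f)
    (hsm : ∀ a b : E, ‖gradient f a - gradient f b‖ ≤ L * ‖a - b‖)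
    (w : E) (hw : ∀ z : E, f w ≤ f z) (p : E) :
    1 / (4 * L) * ‖gradient f p‖ ^ 2 ≤ f p - f w := by
  set G := gradient f p with hG
  have h1 := aux_descent f L hL.le hf hsm p (p - (1 / (2 * L)) • G)
  have h2 := hw (p - (1 / (2 * L)) • G)
  have h3 : (p - (1 / (2 * L)) • G) - p = -((1 / (2 * L)) • G) := by abel
  rw [h3] at h1
  rw [inner_neg_right, real_inner_smul_right, real_inner_self_eq_norm_sq,
    norm_neg, norm_smul, Real.norm_eq_abs, abs_of_pos (by positivity)] at h1
  have e : L * (1 / (2 * L) * ‖G‖) ^ 2 = 1 / (4 * L) * ‖G‖ ^ 2 := by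
    field_simp
    ring
  rw [e] at h1
  have e2 : 1 / (2 * L) * ‖G‖ ^ 2 = 1 / (4 * L) * ‖G‖ ^ 2 + 1 / (4 * L) * ‖G‖ ^ 2 := by
    field_simp
    ring
  linarith

lemma aux_grad_sub_linear (f : E → ℝ) (hf : Differentiable ℝ f) (c z : E) :
    gradient (fun y => f y - ⟪c, y⟫) z = gradient f z - c := by
  have h1 : HasFDerivAt (fun y => f y - ⟪c, y⟫) (fderiv ℝ f z - innerSL ℝ c) z :=
    (hf z).hasFDerivAt.sub ((innerSL ℝ c).hasFDerivAt)
  have h2 : fderiv ℝ f z - innerSL ℝ c = toDual ℝ E (gradient f z - c) := by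
    ext v
    rw [ContinuousLinearMap.sub_apply, aux_fderiv_apply f hf, InnerProductSpace.toDual_apply_apply, innerSL_apply_apply, inner_sub_left]
  rw [h2] at h1
  have h3 := h1.hasGradientAt.gradient
  rw [h3]; exact (toDual ℝ E).symm_apply_apply _

lemma aux_grad_psi (f : E → ℝ) (hf : Differentiable ℝ f) (c : ℝ) (z : E) :
    gradient (fun y => f y - c / 2 * ‖y‖ ^ 2) z = gradient f z - c • z := by
  have h1 : HasFDerivAt (fun y : E => f y - c / 2 * ‖y‖ ^ 2)
      (fderiv ℝ f z - (c / 2) • (2 • (innerSL ℝ z))) z :=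
    (hf z).hasFDerivAt.sub
      (((hasStrictFDerivAt_norm_sq z).hasFDerivAt).const_mul (c / 2))
  have h2 : fderiv ℝ f z - (c / 2) • (2 • (innerSL ℝ z)) = toDual ℝ E (gradient f z - c • z) := by
    ext v
    rw [ContinuousLinearMap.sub_apply, aux_fderiv_apply f hf]
    simp [inner_sub_left, real_inner_smul_left,
      InnerProductSpace.toDual_apply_apply]
    ring
  rw [h2] at h1
  have h3 := h1.hasGradientAt.gradient
  rw [h3]; exact (toDual ℝ E).symm_apply_apply _

lemma aux_convexOn_normsq (c : ℝ) (hc : 0 ≤ c) :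
    ConvexOn ℝ (Set.univ : Set E) (fun z => c * ‖z‖ ^ 2) := by
  refine ⟨convex_univ, fun p _ q _ a b ha hb hab => ?_⟩
  have h1 : ‖a • p + b • q‖ ≤ a * ‖p‖ + b * ‖q‖ := by
    calc ‖a • p + b • q‖ ≤ ‖a • p‖ + ‖b • q‖ := norm_add_le _ _
      _ = a * ‖p‖ + b * ‖q‖ := by
          rw [norm_smul, norm_smul, Real.norm_eq_abs, Real.norm_eq_abs,
            abs_of_nonneg ha, abs_of_nonneg hb]
  have h2 : ‖a • p + b • q‖ ^ 2 ≤ (a * ‖p‖ + b * ‖q‖) ^ 2 :=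
    pow_le_pow_left₀ (norm_nonneg _) h1 2
  have h3 : c * ‖a • p + b • q‖ ^ 2 ≤ c * (a * ‖p‖ + b * ‖q‖) ^ 2 :=
    mul_le_mul_of_nonneg_left h2 hc
  simp only [smul_eq_mul]
  have hb1 : b = 1 - a := by linarith
  subst hb1
  have ha1 : (0:ℝ) ≤ 1 - a := by linarith
  nlinarith [mul_nonneg (mul_nonneg hc (mul_nonneg ha ha1)) (sq_nonneg (‖p‖ - ‖q‖))]

end Aux

set_option maxHeartbeats 1000000 in
/-- **One-step contraction for inexact gradient descent (strongly convex case).**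
Let `φ : E → ℝ` be differentiable, `μ`-strongly convex and `L`-smooth with global
minimizer `x*`.  For `0 < β ≤ 1/(2L)`, an arbitrary `g ∈ E`, and `x⁺ = x − βg`:
`‖x⁺ − x*‖² ≤ (1 − βμ/2)‖x − x*‖² + 2β(β + 1/μ)‖g − ∇φ(x)‖²`. -/
theorem inexact_gd_one_step_contraction
    {E : Type*} [NormedAddCommGroup E] [InnerProductSpace ℝ E] [FiniteDimensional ℝ E]
    (φ : E → ℝ) (μ L : ℝ) (hμ : 0 < μ) (hL : 0 < L)
    (hdiff : Differentiable ℝ φ)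
    (hsc : ConvexOn ℝ Set.univ (fun x : E => φ x - μ / 2 * ‖x‖ ^ 2))
    (hsmooth : ∀ a b : E, ‖gradient φ a - gradient φ b‖ ≤ L * ‖a - b‖)
    (xstar : E) (hxstar : IsMinOn φ Set.univ xstar)
    (β : ℝ) (hβ0 : 0 < β) (hβ : β ≤ 1 / (2 * L))
    (x g : E) :
    ‖(x - β • g) - xstar‖ ^ 2
      ≤ (1 - β * μ / 2) * ‖x - xstar‖ ^ 2
        + 2 * β * (β + 1 / μ) * ‖g - gradient φ x‖ ^ 2 := by
  -- notation
  set G := gradient φ x with hGdef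
  set d := x - xstar with hddef
  set e := g - G with hedef
  -- gradient vanishes at the minimizer
  have hlm : IsLocalMin φ xstar := hxstar.isLocalMin Filter.univ_mem
  have hG0 : gradient φ xstar = 0 := by
    have h1 : toDual ℝ E (gradient φ xstar) = toDual ℝ E (0 : E) := by
      rw [← aux_fderiv_eq φ hdiff xstar, hlm.fderiv_eq_zero, map_zero]
    exact (toDual ℝ E).injective h1
  -- differentiability of ψ
  have hψdiff : Differentiable ℝ (fun z : E => φ z - μ / 2 * ‖z‖ ^ 2) :=
    hdiff.sub (fun z =>
      ((hasStrictFDerivAt_norm_sq z).hasFDerivAt.differentiableAt).const_mul (μ / 2))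
  have hψgrad : ∀ z : E, gradient (fun z : E => φ z - μ / 2 * ‖z‖ ^ 2) z
      = gradient φ z - μ • z := fun z => aux_grad_psi φ hdiff μ z
  -- strong monotonicity of the gradient
  have hmono : ∀ a b : E,
      μ * ‖a - b‖ ^ 2 ≤ ⟪gradient φ a - gradient φ b, a - b⟫ := by
    intro a b
    have h1 := aux_first_order _ hψdiff hsc a b
    have h2 := aux_first_order _ hψdiff hsc b a
    have h3 : 0 ≤ ⟪gradient (fun z : E => φ z - μ / 2 * ‖z‖ ^ 2) a
        - gradient (fun z : E => φ z - μ / 2 * ‖z‖ ^ 2) b, a - b⟫ := by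
      have e1 : (b - a : E) = -(a - b) := by abel
      rw [inner_sub_left]
      rw [e1, inner_neg_right] at h1
      linarith
    rw [hψgrad, hψgrad] at h3
    have e2 : (gradient φ a - μ • a) - (gradient φ b - μ • b)
        = (gradient φ a - gradient φ b) - μ • (a - b) := by
      rw [smul_sub]; abel
    rw [e2, inner_sub_left, real_inner_smul_left, real_inner_self_eq_norm_sq] at h3
    linarith
  have hmonoxd : μ * ‖d‖ ^ 2 ≤ ⟪G, d⟫ := by
    have h := hmono x xstar
    rw [hG0, sub_zero] at h
    exact h
  -- convexity of φ
  have hφconv : ConvexOn ℝ (Set.univ : Set E) φ := by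
    have h2 := aux_convexOn_normsq (E := E) (μ / 2) (by positivity)
    refine ⟨convex_univ, fun p _ q _ a b ha hb hab => ?_⟩
    have c1 := hsc.2 (mem_univ p) (mem_univ q) ha hb hab
    have c2 := h2.2 (mem_univ p) (mem_univ q) ha hb hab
    simp only [smul_eq_mul] at c1 c2 ⊢
    linarith
  -- minimality of φ at xstar
  have hw : ∀ z : E, φ xstar ≤ φ z := fun z => hxstar (mem_univ z)
  have gap1 := aux_gap φ L hL hdiff hsmooth xstar hw x
  -- the auxiliary function h z = φ z - ⟪G, z⟫
  set h : E → ℝ := fun z => φ z - ⟪G, z⟫ with hhdef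
  have hdiffh : Differentiable ℝ h :=
    hdiff.sub (innerSL ℝ G).differentiable
  have hgradh : ∀ z : E, gradient h z = gradient φ z - G :=
    fun z => aux_grad_sub_linear φ hdiff G z
  have hsmh : ∀ a b : E, ‖gradient h a - gradient h b‖ ≤ L * ‖a - b‖ := by
    intro a b
    rw [hgradh, hgradh]
    have e1 : (gradient φ a - G) - (gradient φ b - G) = gradient φ a - gradient φ b := by abel
    rw [e1]
    exact hsmooth a b
  have hconvh : ConvexOn ℝ (Set.univ : Set E) h := by
    refine ⟨convex_univ, fun p _ q _ a b ha hb hab => ?_⟩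
    have c1 := hφconv.2 (mem_univ p) (mem_univ q) ha hb hab
    simp only [hhdef, smul_eq_mul, inner_add_right, real_inner_smul_right] at c1 ⊢
    linarith
  have hwh : ∀ z : E, h x ≤ h z := by
    intro z
    have h1 := aux_first_order h hdiffh hconvh x z
    rw [hgradh x] at h1
    rw [← hGdef, sub_self, inner_zero_left] at h1
    linarith
  have gap2 := aux_gap h L hL hdiffh hsmh x hwh xstar
  have hgx : ‖gradient h xstar‖ = ‖G‖ := by
    rw [hgradh xstar, hG0, zero_sub, norm_neg]
  rw [hgx] at gap2
  have hhval : h xstar - h x = φ xstar - φ x + ⟪G, d⟫ := by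
    simp only [hhdef, hddef]
    rw [inner_sub_right]
    ring
  rw [hhval] at gap2
  -- co-coercivity
  have cocoercive : 1 / (2 * L) * ‖G‖ ^ 2 ≤ ⟪G, d⟫ := by
    have e1 : 1 / (2 * L) * ‖G‖ ^ 2 = 1 / (4 * L) * ‖G‖ ^ 2 + 1 / (4 * L) * ‖G‖ ^ 2 := by
      field_simp; ring
    linarith
  -- contraction of the exact step A = d - β • G
  set A := d - β • G with hAdef
  set B := β • e with hBdef
  have hA_exp : ‖A‖ ^ 2 = ‖d‖ ^ 2 - 2 * β * ⟪G, d⟫ + β ^ 2 * ‖G‖ ^ 2 := by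
    rw [hAdef, @norm_sub_sq_real _ _ _ d (β • G)]
    rw [real_inner_smul_right, norm_smul, Real.norm_eq_abs, abs_of_pos hβ0,
      real_inner_comm]
    ring
  have hG2 : β ^ 2 * ‖G‖ ^ 2 ≤ β * ⟪G, d⟫ := by
    have e1 : β * β ≤ β * (1 / (2 * L)) := mul_le_mul_of_nonneg_left hβ hβ0.le
    have e2 : β ^ 2 * ‖G‖ ^ 2 ≤ (β * (1 / (2 * L))) * ‖G‖ ^ 2 := by
      have := mul_le_mul_of_nonneg_right e1 (sq_nonneg ‖G‖)
      calc β ^ 2 * ‖G‖ ^ 2 = β * β * ‖G‖ ^ 2 := by ring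
        _ ≤ (β * (1 / (2 * L))) * ‖G‖ ^ 2 := this
    have e3 : (β * (1 / (2 * L))) * ‖G‖ ^ 2 = β * (1 / (2 * L) * ‖G‖ ^ 2) := by ring
    have e4 : β * (1 / (2 * L) * ‖G‖ ^ 2) ≤ β * ⟪G, d⟫ :=
      mul_le_mul_of_nonneg_left cocoercive hβ0.le
    linarith
  have hmono' : β * (μ * ‖d‖ ^ 2) ≤ β * ⟪G, d⟫ :=
    mul_le_mul_of_nonneg_left hmonoxd hβ0.le
  have hA : ‖A‖ ^ 2 ≤ (1 - β * μ) * ‖d‖ ^ 2 := by nlinarith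
  -- Young's inequality assembly
  set t := β * μ with htdef
  have ht : 0 < t := mul_pos hβ0 hμ
  have hBnorm : ‖B‖ ^ 2 = β ^ 2 * ‖e‖ ^ 2 := by
    rw [hBdef, norm_smul, Real.norm_eq_abs, abs_of_pos hβ0, mul_pow]
  have step1 : ‖A - B‖ ^ 2 ≤ ‖A‖ ^ 2 + 2 * (‖A‖ * ‖B‖) + ‖B‖ ^ 2 := by
    have h1 := norm_sub_le A B
    have h2 := pow_le_pow_left₀ (norm_nonneg (A - B)) h1 2
    nlinarith
  have step2 : 2 * (‖A‖ * ‖B‖) ≤ t / 2 * ‖A‖ ^ 2 + 2 / t * ‖B‖ ^ 2 := by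
    have h2 : 2 * (‖A‖ * ‖B‖) * t ≤ (t / 2 * ‖A‖ ^ 2 + 2 / t * ‖B‖ ^ 2) * t := by
      have e1 : (t / 2 * ‖A‖ ^ 2 + 2 / t * ‖B‖ ^ 2) * t
          = t ^ 2 / 2 * ‖A‖ ^ 2 + 2 * ‖B‖ ^ 2 := by
        field_simp
      rw [e1]
      nlinarith [sq_nonneg (t * ‖A‖ - 2 * ‖B‖)]
    exact le_of_mul_le_mul_right h2 ht
  have step3 : ‖A - B‖ ^ 2 ≤ (1 + t / 2) * ‖A‖ ^ 2 + (1 + 2 / t) * ‖B‖ ^ 2 := by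
    nlinarith
  have step4 : (1 + t / 2) * ‖A‖ ^ 2 ≤ (1 + t / 2) * ((1 - t) * ‖d‖ ^ 2) :=
    mul_le_mul_of_nonneg_left hA (by positivity)
  have step5 : (1 + t / 2) * ((1 - t) * ‖d‖ ^ 2) ≤ (1 - t / 2) * ‖d‖ ^ 2 := by
    nlinarith [sq_nonneg ‖d‖, mul_nonneg (mul_nonneg ht.le ht.le) (sq_nonneg ‖d‖)]
  have step6 : (1 + 2 / t) * ‖B‖ ^ 2 ≤ 2 * β * (β + 1 / μ) * ‖e‖ ^ 2 := by
    rw [hBnorm]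
    have e1 : (1 + 2 / t) * (β ^ 2 * ‖e‖ ^ 2)
        = (β ^ 2 + 2 * β / μ) * ‖e‖ ^ 2 := by
      rw [htdef]
      field_simp
    have e2' : 2 * β * (β + 1 / μ) = 2 * β ^ 2 + 2 * β / μ := by
      field_simp
    have e2 : 2 * β * (β + 1 / μ) * ‖e‖ ^ 2
        = (2 * β ^ 2 + 2 * β / μ) * ‖e‖ ^ 2 := by rw [e2']
    rw [e1, e2]
    have e3 : β ^ 2 * ‖e‖ ^ 2 ≥ 0 := by positivity
    nlinarith
  have hfinal : ‖A - B‖ ^ 2 ≤ (1 - t / 2) * ‖d‖ ^ 2 + 2 * β * (β + 1 / μ) * ‖e‖ ^ 2 := by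
    linarith
  have hrw : (x - β • g) - xstar = A - B := by
    rw [hAdef, hBdef, hddef, hedef, smul_sub]
    abel
  rw [hrw]
  exact hfinal
end

section
/- (Client-level convergence, strongly convex case.) Let E be a finite-dimensional real inner product space, let f : E → ℝ be differentiable, μ_f-strongly convex (μ_f > 0), and L_f-smooth, let λ > 0, w ∈ E, and 0 < α ≤ 1/(L_f + λ). Define θ⁰ = w and θ^{l+1} = θ^l − α ( ∇f(θ^l) + λ(θ^l − w) ) for l ∈ ℕ. Then for every L ∈ ℕ: ‖θ^L − prox_{f/λ}(w)‖² ≤ (1 − α(μ_f + λ))^L ‖w − prox_{f/λ}(w)‖². -/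
open Set InnerProductSpace
open scoped RealInnerProductSpace

section aux
variable {E : Type*} [NormedAddCommGroup E] [InnerProductSpace ℝ E] [CompleteSpace E]

lemma myLineDeriv (h : E → ℝ) (H : E → E) (hH : ∀ u, HasGradientAt h (H u) u)
    (x v : E) (t : ℝ) :
    HasDerivAt (fun s : ℝ => h (x + s • v)) ⟪H (x + t • v), v⟫_ℝ t := by
  have h1 : HasDerivAt (fun s : ℝ => x + s • v) v t := by
    simpa using ((hasDerivAt_id t).smul_const v).const_add x
  have h2 := (hH (x + t • v)).hasFDerivAt.comp_hasDerivAt t h1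
  simpa [InnerProductSpace.toDual_apply_apply, Function.comp_def] using h2

lemma myConvexIneq (h : E → ℝ) (H : E → E) (hH : ∀ u, HasGradientAt h (H u) u)
    (hc : ConvexOn ℝ univ h) (x y : E) : h x + ⟪H x, y - x⟫_ℝ ≤ h y := by
  have hφc : ConvexOn ℝ univ fun t : ℝ => h (x + t • (y - x)) := by
    have hcomp := hc.comp_affineMap (AffineMap.lineMap x y : ℝ →ᵃ[ℝ] E)
    have heq : (h ∘ (AffineMap.lineMap x y : ℝ →ᵃ[ℝ] E)) = fun t : ℝ => h (x + t • (y - x)) := by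
      funext t
      simp [AffineMap.lineMap_apply, add_comm]
    rw [Set.preimage_univ, heq] at hcomp
    exact hcomp
  have hd := myLineDeriv h H hH x (y - x) 0
  have hkey := hφc.le_slope_of_hasDerivAt (Set.mem_univ (0:ℝ)) (Set.mem_univ (1:ℝ)) one_pos
    (by simpa using hd)
  rw [slope_def_field] at hkey
  have e1 : x + (1:ℝ) • (y - x) = y := by rw [one_smul]; abel
  have e0 : x + (0:ℝ) • (y - x) = x := by rw [zero_smul, add_zero]
  rw [e1, e0] at hkey
  simp at hkey
  linarith

lemma myDescent (h : E → ℝ) (H : E → E) (hH : ∀ u, HasGradientAt h (H u) u)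
    (L : ℝ) (hlip : ∀ a b : E, ‖H a - H b‖ ≤ L * ‖a - b‖) (x y : E) :
    h y ≤ h x + ⟪H x, y - x⟫_ℝ + L / 2 * ‖y - x‖ ^ 2 := by
  set v := y - x with hv
  have hD : ∀ t : ℝ, HasDerivAt
      (fun s : ℝ => h (x + s • v) - s * ⟪H x, v⟫_ℝ - L * s ^ 2 / 2 * ‖v‖ ^ 2)
      (⟪H (x + t • v), v⟫_ℝ - ⟪H x, v⟫_ℝ - L * t * ‖v‖ ^ 2) t := by
    intro t
    have h1 := myLineDeriv h H hH x v t
    have h2 : HasDerivAt (fun s : ℝ => s * ⟪H x, v⟫_ℝ) ⟪H x, v⟫_ℝ t := by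
      simpa using (hasDerivAt_id t).mul_const ⟪H x, v⟫_ℝ
    have h3 : HasDerivAt (fun s : ℝ => L * s ^ 2 / 2 * ‖v‖ ^ 2) (L * t * ‖v‖ ^ 2) t := by
      have h4 := (((hasDerivAt_pow 2 t).const_mul L).div_const 2).mul_const (‖v‖ ^ 2)
      refine h4.congr_deriv ?_
      rw [show (2:ℕ) - 1 = 1 from rfl]
      ring
    exact (h1.sub h2).sub h3
  have hanti : AntitoneOn
      (fun s : ℝ => h (x + s • v) - s * ⟪H x, v⟫_ℝ - L * s ^ 2 / 2 * ‖v‖ ^ 2) (Set.Icc 0 1) := by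
    apply antitoneOn_of_deriv_nonpos (convex_Icc 0 1)
    · exact (Differentiable.continuous (fun t => (hD t).differentiableAt)).continuousOn
    · intro t _
      exact ((hD t).differentiableAt).differentiableWithinAt
    · intro t ht
      rw [interior_Icc] at ht
      rw [(hD t).deriv]
      have hcs : ⟪H (x + t • v) - H x, v⟫_ℝ ≤ ‖H (x + t • v) - H x‖ * ‖v‖ :=
        real_inner_le_norm _ _
      have hl := hlip (x + t • v) x
      have he : x + t • v - x = t • v := add_sub_cancel_left x (t • v)
      rw [he] at hl
      have hn : ‖t • v‖ = t * ‖v‖ := by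
        rw [norm_smul, Real.norm_eq_abs, abs_of_pos ht.1]
      rw [hn] at hl
      have hsub : ⟪H (x + t • v) - H x, v⟫_ℝ
          = ⟪H (x + t • v), v⟫_ℝ - ⟪H x, v⟫_ℝ := inner_sub_left _ _ _
      have f1 : ‖H (x + t • v) - H x‖ * ‖v‖ ≤ L * (t * ‖v‖) * ‖v‖ :=
        mul_le_mul_of_nonneg_right hl (norm_nonneg v)
      nlinarith [hsub, hcs, f1]
  have h01 := hanti (Set.left_mem_Icc.mpr zero_le_one) (Set.right_mem_Icc.mpr zero_le_one)
    zero_le_one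
  have e1 : x + (1:ℝ) • v = y := by rw [one_smul, hv]; abel
  have e0 : x + (0:ℝ) • v = x := by rw [zero_smul, add_zero]
  simp only [e1, e0, one_mul, one_pow, zero_mul, zero_pow, mul_zero, sub_zero] at h01
  norm_num at h01
  linarith

lemma myNormSqGrad (c : ℝ) (w u : E) :
    HasGradientAt (fun z : E => c / 2 * ‖z - w‖ ^ 2) (c • (u - w)) u := by
  have h1 : HasFDerivAt (fun z : E => ‖z - w‖ ^ 2) ((2:ℕ) • (innerSL ℝ (u - w))) u := by
    have h0 := ((hasFDerivAt_id u).sub_const w).norm_sq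
    simpa using h0
  have h2 := h1.const_mul (c / 2)
  have h3 : (c / 2) • ((2:ℕ) • (innerSL ℝ (u - w))) = InnerProductSpace.toDual ℝ E (c • (u - w)) := by
    ext z
    simp [InnerProductSpace.toDual_apply_apply, real_inner_smul_left]
    ring
  rw [h3] at h2
  exact h2

end aux

/-- **Client-level convergence of PerMFL, strongly convex case.**
Let `f : E → ℝ` be differentiable, `μ_f`-strongly convex and `L_f`-smooth, `λ > 0`,
`w ∈ E`, `0 < α ≤ 1/(L_f + λ)`.  With `θ⁰ = w` and
`θ^{l+1} = θˡ − α(∇f(θˡ) + λ(θˡ − w))`, for every `L`: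
`‖θ^L − prox_{f/λ}(w)‖² ≤ (1 − α(μ_f + λ))^L ‖w − prox_{f/λ}(w)‖²`. -/
theorem permfl_client_convergence_strongly_convex
    {E : Type*} [NormedAddCommGroup E] [InnerProductSpace ℝ E] [FiniteDimensional ℝ E]
    (f : E → ℝ) (μf Lf lam : ℝ) (hμf : 0 < μf) (hlam : 0 < lam)
    (hdiff : Differentiable ℝ f)
    (hsc : ConvexOn ℝ Set.univ (fun x : E => f x - μf / 2 * ‖x‖ ^ 2))
    (hsmooth : ∀ x y : E, ‖gradient f x - gradient f y‖ ≤ Lf * ‖x - y‖)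
    (w : E) (α : ℝ) (hα0 : 0 < α) (hα : α ≤ 1 / (Lf + lam))
    (p : E) (hp : IsMinOn (fun u : E => f u + lam / 2 * ‖u - w‖ ^ 2) Set.univ p)
    (θ : ℕ → E) (hθ0 : θ 0 = w)
    (hrec : ∀ l : ℕ, θ (l + 1) = θ l - α • (gradient f (θ l) + lam • (θ l - w))) :
    ∀ L : ℕ, ‖θ L - p‖ ^ 2 ≤ (1 - α * (μf + lam)) ^ L * ‖w - p‖ ^ 2 := by
  rcases subsingleton_or_nontrivial E with hE | hE
  · intro L
    have h1 : θ L - p = 0 := Subsingleton.elim _ _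
    have h2 : w - p = 0 := Subsingleton.elim _ _
    rw [h1, h2]
    simp
  -- Lf + lam > 0
  have hLg : 0 < Lf + lam := by
    by_contra hcon
    push_neg at hcon
    have : (1 : ℝ) / (Lf + lam) ≤ 0 := one_div_nonpos.mpr hcon
    linarith
  have hα' : α * (Lf + lam) ≤ 1 := by
    rw [le_div_iff₀ hLg] at hα
    exact hα
  -- gradients
  have hnsq : ∀ u : E, HasGradientAt (fun z : E => μf / 2 * ‖z‖ ^ 2) (μf • u) u := by
    intro u
    have := myNormSqGrad μf 0 u
    simpa using this
  have hkgrad : ∀ u : E,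
      HasGradientAt (fun z : E => f z - μf / 2 * ‖z‖ ^ 2) (gradient f u - μf • u) u := by
    intro u
    have h := ((hdiff u).hasGradientAt.hasFDerivAt).sub (hnsq u).hasFDerivAt
    rw [← map_sub (InnerProductSpace.toDual ℝ E)] at h
    exact h
  -- strong convexity inequality for f
  have hsf : ∀ x y : E, f x + ⟪gradient f x, y - x⟫_ℝ + μf / 2 * ‖y - x‖ ^ 2 ≤ f y := by
    intro x y
    have hb := myConvexIneq _ _ hkgrad hsc x y
    have e1 : ⟪gradient f x - μf • x, y - x⟫_ℝ
        = ⟪gradient f x, y - x⟫_ℝ - μf * ⟪x, y - x⟫_ℝ := by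
      rw [inner_sub_left, real_inner_smul_left]
    have e2 : ‖y‖ ^ 2 = ‖x‖ ^ 2 + 2 * ⟪x, y - x⟫_ℝ + ‖y - x‖ ^ 2 := by
      have h := norm_add_sq_real x (y - x)
      have e : x + (y - x) = y := by abel
      rw [e] at h
      linarith
    rw [e1] at hb
    have e3 : μf / 2 * ‖y‖ ^ 2
        = μf / 2 * ‖x‖ ^ 2 + μf * ⟪x, y - x⟫_ℝ + μf / 2 * ‖y - x‖ ^ 2 := by
      rw [e2]; ring
    linarith
  -- μf ≤ Lf
  have hμL : μf ≤ Lf := by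
    obtain ⟨e, he⟩ := exists_ne (0 : E)
    have h1 := hsf 0 e
    have h2 := hsf e 0
    have e1 : e - 0 = e := sub_zero e
    have e2 : (0 : E) - e = -e := zero_sub e
    rw [e1] at h1
    rw [e2] at h2
    have e3 : ⟪gradient f e, -e⟫_ℝ = -⟪gradient f e, e⟫_ℝ := inner_neg_right _ _
    rw [e3, norm_neg] at h2
    have hcs : ⟪gradient f e - gradient f 0, e⟫_ℝ ≤ ‖gradient f e - gradient f 0‖ * ‖e‖ :=
      real_inner_le_norm _ _
    have hl := hsmooth e 0
    rw [e1] at hl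
    have hsub : ⟪gradient f e - gradient f 0, e⟫_ℝ
        = ⟪gradient f e, e⟫_ℝ - ⟪gradient f 0, e⟫_ℝ := inner_sub_left _ _ _
    have hepos : 0 < ‖e‖ := norm_pos_iff.mpr he
    have hA : μf * ‖e‖ ^ 2 ≤ Lf * ‖e‖ ^ 2 := by
      nlinarith [mul_le_mul_of_nonneg_right hl (norm_nonneg e)]
    exact le_of_mul_le_mul_right (by nlinarith) (by positivity : (0:ℝ) < ‖e‖ ^ 2)
  have hμα : α * (μf + lam) ≤ 1 := by
    have : α * (μf + lam) ≤ α * (Lf + lam) := by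
      apply mul_le_mul_of_nonneg_left (by linarith) hα0.le
    linarith
  have h1m : 0 ≤ 1 - α * (μf + lam) := by linarith
  -- the objective g and its gradient G
  set g : E → ℝ := fun u : E => f u + lam / 2 * ‖u - w‖ ^ 2 with hgdef
  set G : E → E := fun u : E => gradient f u + lam • (u - w) with hGdef
  have hggrad : ∀ u : E, HasGradientAt g (G u) u := by
    intro u
    have h := ((hdiff u).hasGradientAt.hasFDerivAt).add (myNormSqGrad lam w u).hasFDerivAt
    rw [← map_add (InnerProductSpace.toDual ℝ E)] at h
    exact h
  have hglip : ∀ a b : E, ‖G a - G b‖ ≤ (Lf + lam) * ‖a - b‖ := by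
    intro a b
    have e : G a - G b = (gradient f a - gradient f b) + lam • (a - b) := by
      simp only [hGdef]
      module
    rw [e]
    calc ‖(gradient f a - gradient f b) + lam • (a - b)‖
        ≤ ‖gradient f a - gradient f b‖ + ‖lam • (a - b)‖ := norm_add_le _ _
      _ ≤ Lf * ‖a - b‖ + lam * ‖a - b‖ := by
          have : ‖lam • (a - b)‖ = lam * ‖a - b‖ := by
            rw [norm_smul, Real.norm_eq_abs, abs_of_pos hlam]
          rw [this]
          exact add_le_add_left (hsmooth a b) _
      _ = (Lf + lam) * ‖a - b‖ := by ring
  -- strong convexity inequality for g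
  have hgs : ∀ x y : E, g x + ⟪G x, y - x⟫_ℝ + (μf + lam) / 2 * ‖y - x‖ ^ 2 ≤ g y := by
    intro x y
    have h1 := hsf x y
    have e1 : ⟪G x, y - x⟫_ℝ = ⟪gradient f x, y - x⟫_ℝ + lam * ⟪x - w, y - x⟫_ℝ := by
      simp only [hGdef]
      rw [inner_add_left, real_inner_smul_left]
    have e2 : ‖y - w‖ ^ 2 = ‖x - w‖ ^ 2 + 2 * ⟪x - w, y - x⟫_ℝ + ‖y - x‖ ^ 2 := by
      have h := norm_add_sq_real (x - w) (y - x)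
      have e : x - w + (y - x) = y - w := by abel
      rw [e] at h
      linarith
    have e3 : lam / 2 * ‖y - w‖ ^ 2
        = lam / 2 * ‖x - w‖ ^ 2 + lam * ⟪x - w, y - x⟫_ℝ + lam / 2 * ‖y - x‖ ^ 2 := by
      rw [e2]; ring
    simp only [hgdef]
    rw [e1]
    linarith
  have hdesc := myDescent g G hggrad (Lf + lam) hglip
  have hmin : ∀ u : E, g p ≤ g u := fun u => hp (Set.mem_univ u)
  -- key one-step contraction
  have key : ∀ x : E, ‖x - α • G x - p‖ ^ 2 ≤ (1 - α * (μf + lam)) * ‖x - p‖ ^ 2 := by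
    intro x
    set N := ‖G x‖ ^ 2 with hN
    set S := ⟪G x, x - p⟫_ℝ with hS
    set d := ‖x - p‖ ^ 2 with hd
    have hexp : ‖x - α • G x - p‖ ^ 2 = d - 2 * (α * S) + α ^ 2 * N := by
      have e : x - α • G x - p = (x - p) - α • G x := by abel
      rw [e, norm_sub_sq_real]
      have e1 : ⟪x - p, α • G x⟫_ℝ = α * S := by
        rw [real_inner_smul_right, real_inner_comm]
      have e2 : ‖α • G x‖ ^ 2 = α ^ 2 * N := by
        rw [norm_smul, Real.norm_eq_abs, mul_pow, sq_abs]
      rw [e1, e2]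
    -- strong convexity at x vs p
    have h1 := hgs x p
    have e3 : ⟪G x, p - x⟫_ℝ = -S := by
      rw [show p - x = -(x - p) by abel, inner_neg_right]
    have e4 : ‖p - x‖ ^ 2 = d := by rw [norm_sub_rev]
    rw [e3, e4] at h1
    -- descent step
    have h2 := hdesc x (x - α • G x)
    have e5 : x - α • G x - x = -(α • G x) := by abel
    rw [e5] at h2
    have e6 : ⟪G x, -(α • G x)⟫_ℝ = -(α * N) := by
      rw [inner_neg_right, real_inner_smul_right, real_inner_self_eq_norm_sq]
    have e7 : ‖-(α • G x)‖ ^ 2 = α ^ 2 * N := by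
      rw [norm_neg, norm_smul, Real.norm_eq_abs, mul_pow, sq_abs]
    rw [e6, e7] at h2
    have h3 := hmin (x - α • G x)
    have hNnn : 0 ≤ N := by rw [hN]; positivity
    have hdnn : 0 ≤ d := by rw [hd]; positivity
    rw [hexp]
    clear_value N S d
    clear hexp hN hS hd e3 e4 e5 e6 e7
    generalize g x = gx at h1 h2
    generalize g p = gp at h1 h3
    generalize g (x - α • G x) = gq at h2 h3
    -- combine
    have hgap : α * N - (Lf + lam) / 2 * (α ^ 2 * N) ≤ gx - gp := by linarith
    have hcube : (Lf + lam) * α ^ 3 * N ≤ α ^ 2 * N := by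
      have := mul_le_mul_of_nonneg_right hα' (mul_nonneg (mul_nonneg hα0.le hα0.le) hNnn)
      nlinarith
    have hSlb : gx - gp + (μf + lam) / 2 * d ≤ S := by linarith
    nlinarith [mul_le_mul_of_nonneg_left hSlb (by linarith : (0:ℝ) ≤ 2 * α),
      mul_le_mul_of_nonneg_left hgap (by linarith : (0:ℝ) ≤ 2 * α)]
  -- induction
  intro L
  induction L with
  | zero => simp [hθ0]
  | succ n ih =>
      have hrw : θ (n + 1) = θ n - α • G (θ n) := by
        rw [hrec n, hGdef]
      calc ‖θ (n + 1) - p‖ ^ 2 = ‖θ n - α • G (θ n) - p‖ ^ 2 := by rw [hrw]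
        _ ≤ (1 - α * (μf + lam)) * ‖θ n - p‖ ^ 2 := key (θ n)
        _ ≤ (1 - α * (μf + lam)) * ((1 - α * (μf + lam)) ^ n * ‖w - p‖ ^ 2) :=
            mul_le_mul_of_nonneg_left ih h1m
        _ = (1 - α * (μf + lam)) ^ (n + 1) * ‖w - p‖ ^ 2 := by ring
end

section
/- (Team-level convergence, non-convex case.) Let E be a finite-dimensional real inner product space, fix a team with N ≥ 1 devices whose losses f_j : E → ℝ are differentiable with L_f-Lipschitz gradient (not necessarily convex), let γ > 2λ > 4L_f ≥ 0, and fix x̄ ∈ E. Define F(w) = (1/N)∑_{j=1}^{N} f̃^λ_j(w) and p(w) = F(w) + (γ/2)‖w − x̄‖² (so F is differentiable and λ-smooth, p is (γ−λ)-strongly convex with unique minimizer prox_{F/γ}(x̄), and min p = F̃^γ(x̄)). Let δ_j ≥ 0, 0 < η ≤ 1/(λ+γ), and K ≥ 1; suppose w⁰ = x̄ and, for each k < K, points θ_j^k ∈ E satisfy ‖θ_j^k − prox_{f_j/λ}(w^k)‖² ≤ δ_j for every j, together with the recursion w^{k+1} = (1 − η(λ+γ)) w^k + ηγ x̄ + (λη/N)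 ∑_{j=1}^{N} θ_j^k. Then there exists k < K such that ‖w^k − prox_{F/γ}(x̄)‖² ≤ (1/(γ−λ)²) ( (2/(Kη)) ( F(x̄) − F̃^γ(x̄) ) + λ² (1/N) ∑_{j=1}^{N} δ_j ). -/
set_option linter.unusedSectionVars false
set_option linter.deprecated false
set_option maxHeartbeats 1000000

open InnerProductSpace RealInnerProductSpace

section Aux

open InnerProductSpace

variable {E : Type*} [NormedAddCommGroup E] [InnerProductSpace ℝ E] [FiniteDimensional ℝ E]

lemma quad_fderiv (c : ℝ) (v z : E) :
    HasFDerivAt (fun u : E => c / 2 * ‖u - v‖ ^ 2) (toDual ℝ E (c • (z - v))) z := by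
  have h0 : HasFDerivAt (fun u : E => u - v) (ContinuousLinearMap.id ℝ E) z :=
    (hasFDerivAt_id z).sub_const v
  have h1 := (h0.inner ℝ h0).const_mul (c / 2)
  have hfun : (fun u : E => c / 2 * (inner ℝ (u - v) (u - v) : ℝ))
      = fun u : E => c / 2 * ‖u - v‖ ^ 2 := by
    funext u; rw [real_inner_self_eq_norm_sq]
  rw [hfun] at h1
  refine h1.congr_fderiv ?_
  ext w
  simp [fderivInnerCLM_apply, real_inner_comm, toDual_apply_apply, inner_smul_left,
    inner_sub_left, inner_sub_right]
  ring

lemma prox_foc {f : E → ℝ} (hd : Differentiable ℝ f) (c : ℝ) {v z : E}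
    (hz : IsMinOn (fun u : E => f u + c / 2 * ‖u - v‖ ^ 2) Set.univ z) :
    gradient f z = c • (v - z) := by
  have hloc : IsLocalMin (fun u : E => f u + c / 2 * ‖u - v‖ ^ 2) z :=
    hz.isLocalMin (by simp)
  have hf : HasFDerivAt f (toDual ℝ E (gradient f z)) z :=
    ((hd z).hasGradientAt).hasFDerivAt
  have hsum := hf.add (quad_fderiv c v z)
  have h0 := hloc.hasFDerivAt_eq_zero hsum
  have h0' : toDual ℝ E (gradient f z + c • (z - v)) = 0 := by
    rw [map_add]; exact h0
  have h1 : gradient f z + c • (z - v) = 0 := (toDual ℝ E).injective (by simp [h0'])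
  have : gradient f z = - (c • (z - v)) := by linear_combination (norm := abel) h1
  rw [this, ← smul_neg, neg_sub]

lemma prox_lip {f : E → ℝ} (hd : Differentiable ℝ f) {Lf lam : ℝ}
    (hlip : ∀ x y : E, ‖gradient f x - gradient f y‖ ≤ Lf * ‖x - y‖)
    (hLf0 : 0 ≤ Lf) (hlam : 2 * Lf < lam) {v v' z z' : E}
    (hz : IsMinOn (fun u : E => f u + lam / 2 * ‖u - v‖ ^ 2) Set.univ z)
    (hz' : IsMinOn (fun u : E => f u + lam / 2 * ‖u - v'‖ ^ 2) Set.univ z') :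
    ‖z - z'‖ ≤ 2 * ‖v - v'‖ := by
  have hlam0 : (0:ℝ) < lam := by linarith
  have hgz := prox_foc hd lam hz
  have hgz' := prox_foc hd lam hz'
  have key : lam * ‖z - z'‖ ^ 2
      = lam * (inner ℝ (v - v') (z - z') : ℝ)
        - (inner ℝ (gradient f z - gradient f z') (z - z') : ℝ) := by
    rw [hgz, hgz', ← real_inner_self_eq_norm_sq]
    simp only [inner_sub_left, inner_sub_right, inner_smul_left, RCLike.ofReal_real_eq_id,
      id_eq, conj_trivial]
    ring
  have hb1 : (inner ℝ (v - v') (z - z') : ℝ) ≤ ‖v - v'‖ * ‖z - z'‖ := real_inner_le_norm _ _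
  have hb2 : -(Lf * ‖z - z'‖ * ‖z - z'‖) ≤ (inner ℝ (gradient f z - gradient f z') (z - z') : ℝ) := by
    have := abs_real_inner_le_norm (gradient f z - gradient f z') (z - z')
    have h3 := hlip z z'
    have := neg_abs_le (inner ℝ (gradient f z - gradient f z') (z - z') : ℝ)
    nlinarith [norm_nonneg (z - z')]
  have hd2 : (lam - Lf) * ‖z - z'‖ ^ 2 ≤ lam * (‖v - v'‖ * ‖z - z'‖) := by
    nlinarith [norm_nonneg (z - z'), norm_nonneg (v - v')]
  rcases eq_or_lt_of_le (norm_nonneg (z - z')) with h0 | h0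
  · rw [← h0]; positivity
  · have hcancel : (lam - Lf) * ‖z - z'‖ ≤ lam * ‖v - v'‖ :=
      le_of_mul_le_mul_right
        (by nlinarith [hd2] :
          (lam - Lf) * ‖z - z'‖ * ‖z - z'‖ ≤ lam * ‖v - v'‖ * ‖z - z'‖) h0
    have h5 : lam * ‖z - z'‖ ≤ lam * (2 * ‖v - v'‖) := by
      nlinarith [mul_nonneg (by linarith : (0:ℝ) ≤ lam - 2 * Lf) h0.le]
    exact le_of_mul_le_mul_left (by linarith) hlam0
set_option linter.unusedSectionVars false
set_option linter.deprecated false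

open InnerProductSpace RealInnerProductSpace

variable {E : Type*} [NormedAddCommGroup E] [InnerProductSpace ℝ E] [FiniteDimensional ℝ E]

lemma norm_expand (a b c : E) :
    ‖a - c‖ ^ 2 = ‖a - b‖ ^ 2 + 2 * ⟪a - b, b - c⟫_ℝ + ‖b - c‖ ^ 2 := by
  have h : a - c = (a - b) + (b - c) := by abel
  rw [h, norm_add_sq_real]

lemma env_descent {f : E → ℝ} {lam : ℝ} {P : E → E}
    (hP : ∀ v : E, IsMinOn (fun u : E => f u + lam / 2 * ‖u - v‖ ^ 2) Set.univ (P v))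
    (v v' : E) :
    f (P v') + lam / 2 * ‖P v' - v'‖ ^ 2
      ≤ f (P v) + lam / 2 * ‖P v - v‖ ^ 2 + lam * ⟪v - P v, v' - v⟫_ℝ
        + lam / 2 * ‖v' - v‖ ^ 2 := by
  have h1 : f (P v') + lam / 2 * ‖P v' - v'‖ ^ 2 ≤ f (P v) + lam / 2 * ‖P v - v'‖ ^ 2 :=
    isMinOn_iff.mp (hP v') (P v) trivial
  have h2 : ‖P v - v'‖ ^ 2 = ‖P v - v‖ ^ 2 + 2 * ⟪P v - v, v - v'⟫_ℝ + ‖v - v'‖ ^ 2 :=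
    norm_expand _ _ _
  have h3 : ⟪P v - v, v - v'⟫_ℝ = ⟪v - P v, v' - v⟫_ℝ := by
    have : ⟪v - P v, v' - v⟫_ℝ = ⟪-(P v - v), -(v - v')⟫_ℝ := by rw [neg_sub, neg_sub]
    rw [this, inner_neg_neg]
  have h4 : ‖v - v'‖ = ‖v' - v‖ := norm_sub_rev _ _
  rw [h2, h3, h4] at h1
  linarith [h1]

lemma jensen_sq {N : ℕ} (v : Fin N → E) :
    ‖∑ j, v j‖ ^ 2 ≤ (N : ℝ) * ∑ j, ‖v j‖ ^ 2 := by
  calc ‖∑ j, v j‖ ^ 2 ≤ (∑ j, ‖v j‖) ^ 2 := by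
        exact pow_le_pow_left₀ (norm_nonneg _) (norm_sum_le Finset.univ v) 2
    _ ≤ ((Finset.univ (α := Fin N)).card : ℝ) * ∑ j, ‖v j‖ ^ 2 :=
        sq_sum_le_card_mul_sum_sq (s := Finset.univ) (f := fun j => ‖v j‖)
    _ = (N : ℝ) * ∑ j, ‖v j‖ ^ 2 := by rw [Finset.card_univ, Fintype.card_fin]

lemma iInf_of_isMinOn {φ : E → ℝ} {z : E} (hz : IsMinOn φ Set.univ z) :
    (⨅ u : E, φ u) = φ z := by
  apply le_antisymm
  · exact ciInf_le ⟨φ z, by rintro b ⟨u, rfl⟩; exact isMinOn_iff.mp hz u trivial⟩ z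
  · exact le_ciInf fun u => isMinOn_iff.mp hz u trivial

end Aux

/-- **Team-level convergence of PerMFL, non-convex case.**
Fix a team of `N ≥ 1` devices with `L_f`-smooth (not necessarily convex) losses
`f j : E → ℝ`, `γ > 2λ > 4L_f ≥ 0`, anchor `x̄`, team objective
`F(w) = (1/N)∑ⱼ f̃ⱼ^λ(w)`.  With errors `δⱼ ≥ 0`, step size `0 < η ≤ 1/(λ+γ)`,
`K ≥ 1`, initialization `w⁰ = x̄`, device approximations
`‖θⱼᵏ − prox_{fⱼ/λ}(wᵏ)‖² ≤ δⱼ`, and recursion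
`w^{k+1} = (1 − η(λ+γ))wᵏ + ηγ x̄ + (λη/N)∑ⱼ θⱼᵏ` for `k < K`, there exists
`k < K` with `‖wᵏ − prox_{F/γ}(x̄)‖²
≤ (1/(γ−λ)²)((2/(Kη))(F(x̄) − F̃^γ(x̄)) + λ²(1/N)∑ⱼ δⱼ)`. -/
theorem permfl_team_convergence_nonconvex
    {E : Type*} [NormedAddCommGroup E] [InnerProductSpace ℝ E] [FiniteDimensional ℝ E]
    {N : ℕ} (hN : 1 ≤ N) (f : Fin N → E → ℝ)
    (Lf lam gam : ℝ) (hLf : 0 ≤ Lf) (h1 : 4 * Lf < 2 * lam) (h2 : 2 * lam < gam)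
    (hdiff : ∀ j, Differentiable ℝ (f j))
    (hlip : ∀ j, ∀ x y : E, ‖gradient (f j) x - gradient (f j) y‖ ≤ Lf * ‖x - y‖)
    (xbar : E)
    (F : E → ℝ)
    (hF : ∀ w : E,
      F w = (1 / (N : ℝ)) * ∑ j : Fin N, ⨅ θ : E, (f j θ + lam / 2 * ‖θ - w‖ ^ 2))
    (proxf : Fin N → E → E)
    (hproxf : ∀ j (v : E),
      IsMinOn (fun θ : E => f j θ + lam / 2 * ‖θ - v‖ ^ 2) Set.univ (proxf j v))
    (proxF : E)
    (hproxF : IsMinOn (fun u : E => F u + gam / 2 * ‖u - xbar‖ ^ 2) Set.univ proxF)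
    (δ : Fin N → ℝ) (hδ : ∀ j, 0 ≤ δ j)
    (η : ℝ) (hη0 : 0 < η) (hη : η ≤ 1 / (lam + gam))
    (K : ℕ) (hK : 1 ≤ K) (w : ℕ → E) (θ : Fin N → ℕ → E)
    (hw0 : w 0 = xbar)
    (hθ : ∀ j, ∀ k < K, ‖θ j k - proxf j (w k)‖ ^ 2 ≤ δ j)
    (hrec : ∀ k < K,
      w (k + 1) = (1 - η * (lam + gam)) • w k + (η * gam) • xbar
        + ((lam * η) / (N : ℝ)) • ∑ j : Fin N, θ j k) :
    ∃ k < K,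
      ‖w k - proxF‖ ^ 2
        ≤ (1 / (gam - lam) ^ 2)
            * ((2 / ((K : ℝ) * η))
                  * (F xbar - ⨅ u : E, (F u + gam / 2 * ‖u - xbar‖ ^ 2))
                + lam ^ 2 * ((1 / (N : ℝ)) * ∑ j : Fin N, δ j)) := by
  have hN0 : (0 : ℝ) < (N : ℝ) := by exact_mod_cast Nat.lt_of_lt_of_le Nat.zero_lt_one hN
  have hlam0 : (0 : ℝ) < lam := by linarith
  have hgam0 : (0 : ℝ) < gam := by linarith
  have hgl : lam < gam := by linarith
  have hlg0 : (0 : ℝ) < lam + gam := by linarith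
  set c : ℝ := 1 / (N : ℝ) with hc
  have hc0 : 0 < c := by positivity
  have hcN : c * (N : ℝ) = 1 := by rw [hc]; field_simp
  set Δ : ℝ := c * ∑ j : Fin N, δ j with hΔ
  have hΔ0 : 0 ≤ Δ := by
    have : 0 ≤ ∑ j : Fin N, δ j := Finset.sum_nonneg fun j _ => hδ j
    positivity
  set avgP : E → E := fun v => c • ∑ j : Fin N, proxf j v with havgP
  set g : E → E := fun v => lam • (v - avgP v) + gam • (v - xbar) with hg
  set p : E → ℝ := fun u => F u + gam / 2 * ‖u - xbar‖ ^ 2 with hp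
  -- F as average of envelope values
  have hFe : ∀ v : E, F v = c * ∑ j : Fin N, (f j (proxf j v) + lam / 2 * ‖proxf j v - v‖ ^ 2) := by
    intro v
    rw [hF v]
    congr 1
    exact Finset.sum_congr rfl fun j _ => iInf_of_isMinOn (hproxf j v)
  -- descent inequality for F
  have hFd : ∀ v v' : E,
      F v' ≤ F v + lam * ⟪v - avgP v, v' - v⟫_ℝ + lam / 2 * ‖v' - v‖ ^ 2 := by
    intro v v'
    have hsum : ∑ j : Fin N, (f j (proxf j v') + lam / 2 * ‖proxf j v' - v'‖ ^ 2)
        ≤ ∑ j : Fin N, (f j (proxf j v) + lam / 2 * ‖proxf j v - v‖ ^ 2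
            + lam * ⟪v - proxf j v, v' - v⟫_ℝ + lam / 2 * ‖v' - v‖ ^ 2) :=
      Finset.sum_le_sum fun j _ => env_descent (hproxf j) v v'
    have hinner : ∑ j : Fin N, ⟪v - proxf j v, v' - v⟫_ℝ
        = (N : ℝ) * ⟪v, v' - v⟫_ℝ - ⟪∑ j : Fin N, proxf j v, v' - v⟫_ℝ := by
      rw [← sum_inner, Finset.sum_sub_distrib, Finset.sum_const, Finset.card_univ,
        Fintype.card_fin, inner_sub_left, ← Nat.cast_smul_eq_nsmul ℝ, real_inner_smul_left]
    have havg : ⟪v - avgP v, v' - v⟫_ℝ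
        = ⟪v, v' - v⟫_ℝ - c * ⟪∑ j : Fin N, proxf j v, v' - v⟫_ℝ := by
      simp only [havgP]
      rw [inner_sub_left, real_inner_smul_left]
    have hexp : ∑ j : Fin N, (f j (proxf j v) + lam / 2 * ‖proxf j v - v‖ ^ 2
            + lam * ⟪v - proxf j v, v' - v⟫_ℝ + lam / 2 * ‖v' - v‖ ^ 2)
        = (∑ j : Fin N, (f j (proxf j v) + lam / 2 * ‖proxf j v - v‖ ^ 2))
          + lam * (∑ j : Fin N, ⟪v - proxf j v, v' - v⟫_ℝ)
          + (N : ℝ) * (lam / 2 * ‖v' - v‖ ^ 2) := by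
      rw [Finset.sum_add_distrib, Finset.sum_add_distrib, Finset.sum_const, Finset.card_univ,
        Fintype.card_fin, ← Finset.mul_sum, nsmul_eq_mul]
    calc F v' = c * ∑ j : Fin N, (f j (proxf j v') + lam / 2 * ‖proxf j v' - v'‖ ^ 2) := hFe v'
      _ ≤ c * ∑ j : Fin N, (f j (proxf j v) + lam / 2 * ‖proxf j v - v‖ ^ 2
            + lam * ⟪v - proxf j v, v' - v⟫_ℝ + lam / 2 * ‖v' - v‖ ^ 2) :=
          mul_le_mul_of_nonneg_left hsum hc0.le
      _ = F v + lam * ⟪v - avgP v, v' - v⟫_ℝ + lam / 2 * ‖v' - v‖ ^ 2 := by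
          rw [hexp, hinner, havg, hFe v]
          linear_combination (lam * ⟪v, v' - v⟫_ℝ + lam / 2 * ‖v' - v‖ ^ 2) * hcN
  -- descent inequality for p
  have hpd : ∀ v v' : E,
      p v' ≤ p v + ⟪g v, v' - v⟫_ℝ + (lam + gam) / 2 * ‖v' - v‖ ^ 2 := by
    intro v v'
    have h1 := hFd v v'
    have h2 : ‖v' - xbar‖ ^ 2
        = ‖v' - v‖ ^ 2 + 2 * ⟪v' - v, v - xbar⟫_ℝ + ‖v - xbar‖ ^ 2 := norm_expand v' v xbar
    have h3 : ⟪g v, v' - v⟫_ℝ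
        = lam * ⟪v - avgP v, v' - v⟫_ℝ + gam * ⟪v - xbar, v' - v⟫_ℝ := by
      simp only [hg]
      rw [inner_add_left, real_inner_smul_left, real_inner_smul_left]
    have h4 : ⟪v' - v, v - xbar⟫_ℝ = ⟪v - xbar, v' - v⟫_ℝ := real_inner_comm _ _
    calc p v' = F v' + gam / 2 * ‖v' - xbar‖ ^ 2 := by simp only [hp]
      _ ≤ (F v + lam * ⟪v - avgP v, v' - v⟫_ℝ + lam / 2 * ‖v' - v‖ ^ 2)
            + gam / 2 * ‖v' - xbar‖ ^ 2 := by linarith [h1]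
      _ = p v + ⟪g v, v' - v⟫_ℝ + (lam + gam) / 2 * ‖v' - v‖ ^ 2 := by
          simp only [hp]
          rw [h2, h3, h4]
          ring
  -- gradient vanishes at the minimizer
  have hg0 : g proxF = 0 := by
    have hquad := hpd proxF (proxF - (1 / (lam + gam)) • g proxF)
    have hmin' := isMinOn_iff.mp hproxF (proxF - (1 / (lam + gam)) • g proxF) trivial
    have hv : (proxF - (1 / (lam + gam)) • g proxF) - proxF
        = -((1 / (lam + gam)) • g proxF) := by abel
    rw [hv] at hquad
    have e1 : ⟪g proxF, -((1 / (lam + gam)) • g proxF)⟫_ℝ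
        = -((1 / (lam + gam)) * ‖g proxF‖ ^ 2) := by
      rw [inner_neg_right, real_inner_smul_right, real_inner_self_eq_norm_sq]
    have e2 : ‖-((1 / (lam + gam)) • g proxF)‖ ^ 2
        = (1 / (lam + gam)) ^ 2 * ‖g proxF‖ ^ 2 := by
      rw [norm_neg, norm_smul, mul_pow, Real.norm_eq_abs, sq_abs]
    rw [e1, e2] at hquad
    have hcomb : (lam + gam) / 2 * ((1 / (lam + gam)) ^ 2 * ‖g proxF‖ ^ 2)
        = (1 / (lam + gam)) / 2 * ‖g proxF‖ ^ 2 := by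
      field_simp
    have h8 : (1 / (lam + gam)) * ‖g proxF‖ ^ 2 ≤ 0 := by linarith [hquad, hmin', hcomb]
    have h9 : ‖g proxF‖ ^ 2 ≤ 0 := by
      have h10 := mul_le_mul_of_nonneg_left h8 hlg0.le
      have h11 : (lam + gam) * (1 / (lam + gam)) = 1 := by field_simp
      rw [mul_zero, ← mul_assoc, h11, one_mul] at h10
      exact h10
    have h12 : ‖g proxF‖ ^ 2 = 0 := le_antisymm h9 (sq_nonneg _)
    have h13 : ‖g proxF‖ = 0 := by
      exact (pow_eq_zero_iff (by norm_num : 2 ≠ 0)).mp h12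
    exact norm_eq_zero.mp h13
  -- strong-convexity-type error bound
  have hkey : ∀ v : E, ‖v - proxF‖ ^ 2 ≤ (1 / (gam - lam) ^ 2) * ‖g v‖ ^ 2 := by
    intro v
    have hPlip : ∀ j : Fin N, ‖proxf j v - proxf j proxF‖ ≤ 2 * ‖v - proxF‖ := fun j =>
      prox_lip (hdiff j) (hlip j) hLf (by linarith) (hproxf j v) (hproxf j proxF)
    have havgdiff : avgP v - avgP proxF
        = c • ∑ j : Fin N, (proxf j v - proxf j proxF) := by
      simp only [havgP]
      rw [Finset.sum_sub_distrib, smul_sub]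
    have havgn : ‖avgP v - avgP proxF‖ ≤ 2 * ‖v - proxF‖ := by
      rw [havgdiff, norm_smul, Real.norm_eq_abs, abs_of_pos hc0]
      have h9 : ‖∑ j : Fin N, (proxf j v - proxf j proxF)‖
          ≤ ∑ j : Fin N, (2 * ‖v - proxF‖) :=
        (norm_sum_le _ _).trans (Finset.sum_le_sum fun j _ => hPlip j)
      rw [Finset.sum_const, Finset.card_univ, Fintype.card_fin, nsmul_eq_mul] at h9
      calc c * ‖∑ j : Fin N, (proxf j v - proxf j proxF)‖
          ≤ c * ((N : ℝ) * (2 * ‖v - proxF‖)) := mul_le_mul_of_nonneg_left h9 hc0.le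
        _ = 2 * ‖v - proxF‖ := by
            linear_combination (2 * ‖v - proxF‖) * hcN
    have hgdiff : g v = (lam + gam) • (v - proxF) - lam • (avgP v - avgP proxF) := by
      have h0 : lam • (proxF - avgP proxF) + gam • (proxF - xbar) = 0 := by
        have := hg0
        simp only [hg] at this
        exact this
      rw [← sub_eq_zero]
      have hmod : lam • (v - avgP v) + gam • (v - xbar)
          - ((lam + gam) • (v - proxF) - lam • (avgP v - avgP proxF))
          = lam • (proxF - avgP proxF) + gam • (proxF - xbar) := by module
      simp only [hg]
      rw [hmod, h0]
    have hip : (gam - lam) * ‖v - proxF‖ ^ 2 ≤ ⟪g v, v - proxF⟫_ℝ := by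
      rw [hgdiff, inner_sub_left, real_inner_smul_left, real_inner_smul_left,
        real_inner_self_eq_norm_sq]
      have hcs : ⟪avgP v - avgP proxF, v - proxF⟫_ℝ
          ≤ ‖avgP v - avgP proxF‖ * ‖v - proxF‖ := real_inner_le_norm _ _
      nlinarith [mul_le_mul_of_nonneg_left hcs hlam0.le,
        mul_le_mul_of_nonneg_left
          (mul_le_mul_of_nonneg_right havgn (norm_nonneg (v - proxF))) hlam0.le]
    rcases eq_or_lt_of_le (norm_nonneg (v - proxF)) with h0 | h0
    · rw [← h0]
      rw [show ((0:ℝ)) ^ 2 = 0 by norm_num]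
      positivity
    · have hub : ⟪g v, v - proxF⟫_ℝ ≤ ‖g v‖ * ‖v - proxF‖ := real_inner_le_norm _ _
      have hgl2 : (0 : ℝ) < gam - lam := by linarith
      have hd1 : (gam - lam) * ‖v - proxF‖ ≤ ‖g v‖ :=
        le_of_mul_le_mul_right
          (by nlinarith [hip, hub] :
            (gam - lam) * ‖v - proxF‖ * ‖v - proxF‖ ≤ ‖g v‖ * ‖v - proxF‖) h0
      have hsq : (gam - lam) ^ 2 * ‖v - proxF‖ ^ 2 ≤ ‖g v‖ ^ 2 := by
        nlinarith [hd1, norm_nonneg (g v), mul_nonneg hgl2.le (norm_nonneg (v - proxF))]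
      rw [one_div, inv_mul_eq_div, le_div_iff₀ (by positivity)]
      nlinarith [hsq]
  -- one-step descent
  have hdec : ∀ k, k < K →
      p (w (k + 1)) ≤ p (w k) - η / 2 * ‖g (w k)‖ ^ 2 + η / 2 * (lam ^ 2 * Δ) := by
    intro k hk
    set ghat : E := lam • (w k - c • ∑ j : Fin N, θ j k) + gam • (w k - xbar) with hghat
    have hstep : w (k + 1) = w k - η • ghat := by
      rw [hghat, hrec k hk, hc]
      module
    have hquad := hpd (w k) (w k - η • ghat)
    have hv : (w k - η • ghat) - w k = -(η • ghat) := by abel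
    rw [hv] at hquad
    have e1 : ⟪g (w k), -(η • ghat)⟫_ℝ = -(η * ⟪g (w k), ghat⟫_ℝ) := by
      rw [inner_neg_right, real_inner_smul_right]
    have e2 : ‖-(η • ghat)‖ ^ 2 = η ^ 2 * ‖ghat‖ ^ 2 := by
      rw [norm_neg, norm_smul, mul_pow, Real.norm_eq_abs, sq_abs]
    rw [e1, e2] at hquad
    have hpol : 2 * ⟪g (w k), ghat⟫_ℝ = ‖g (w k)‖ ^ 2 + ‖ghat‖ ^ 2 - ‖g (w k) - ghat‖ ^ 2 := by
      have := norm_sub_sq_real (g (w k)) ghat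
      linarith
    have herrv : g (w k) - ghat
        = (lam * c) • (∑ j : Fin N, θ j k - ∑ j : Fin N, proxf j (w k)) := by
      simp only [hg, hghat, havgP]
      module
    have herr : ‖g (w k) - ghat‖ ^ 2 ≤ lam ^ 2 * Δ := by
      rw [herrv, ← Finset.sum_sub_distrib, norm_smul, mul_pow, Real.norm_eq_abs, sq_abs]
      have hj := jensen_sq (fun j => θ j k - proxf j (w k))
      have hsum2 : ∑ j : Fin N, ‖θ j k - proxf j (w k)‖ ^ 2 ≤ ∑ j : Fin N, δ j :=
        Finset.sum_le_sum fun j _ => hθ j k hk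
      have hx : ‖∑ j : Fin N, (θ j k - proxf j (w k))‖ ^ 2 ≤ (N : ℝ) * ∑ j : Fin N, δ j :=
        hj.trans (mul_le_mul_of_nonneg_left hsum2 hN0.le)
      calc (lam * c) ^ 2 * ‖∑ j : Fin N, (θ j k - proxf j (w k))‖ ^ 2
          ≤ (lam * c) ^ 2 * ((N : ℝ) * ∑ j : Fin N, δ j) :=
            mul_le_mul_of_nonneg_left hx (by positivity)
        _ = lam ^ 2 * Δ := by
            rw [hΔ]
            linear_combination (lam ^ 2 * c * ∑ j : Fin N, δ j) * hcN
    have hη1 : η * (lam + gam) ≤ 1 := (le_div_iff₀ hlg0).mp hη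
    calc p (w (k + 1)) = p (w k - η • ghat) := by rw [hstep]
      _ ≤ p (w k) - η * ⟪g (w k), ghat⟫_ℝ + (lam + gam) / 2 * (η ^ 2 * ‖ghat‖ ^ 2) := by
          linarith [hquad]
      _ ≤ p (w k) - η * ⟪g (w k), ghat⟫_ℝ + η / 2 * ‖ghat‖ ^ 2 := by
          nlinarith [mul_nonneg (mul_nonneg hη0.le (sq_nonneg ‖ghat‖))
            (by linarith [hη1] : (0 : ℝ) ≤ 1 - η * (lam + gam))]
      _ ≤ p (w k) - η / 2 * ‖g (w k)‖ ^ 2 + η / 2 * (lam ^ 2 * Δ) := by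
          have h8 : η * ⟪g (w k), ghat⟫_ℝ
              = η / 2 * ‖g (w k)‖ ^ 2 + η / 2 * ‖ghat‖ ^ 2
                - η / 2 * ‖g (w k) - ghat‖ ^ 2 := by
            linear_combination (η / 2) * hpol
          have h9 : η / 2 * ‖g (w k) - ghat‖ ^ 2 ≤ η / 2 * (lam ^ 2 * Δ) :=
            mul_le_mul_of_nonneg_left herr (by positivity)
          linarith [h8, h9]
  -- telescoping
  have hsumle : ∀ m, m ≤ K →
      p (w m) + (η / 2) * ∑ k ∈ Finset.range m, ‖g (w k)‖ ^ 2
        ≤ p (w 0) + (m : ℝ) * (η / 2 * (lam ^ 2 * Δ)) := by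
    intro m
    induction m with
    | zero => simp
    | succ n ih =>
      intro hm
      have hn : n < K := Nat.lt_of_succ_le hm
      have hd := hdec n hn
      have ihh := ih (Nat.le_of_lt hn)
      rw [Finset.sum_range_succ]
      push_cast
      have hmul : (η / 2) * (∑ k ∈ Finset.range n, ‖g (w k)‖ ^ 2 + ‖g (w n)‖ ^ 2)
          = (η / 2) * ∑ k ∈ Finset.range n, ‖g (w k)‖ ^ 2 + (η / 2) * ‖g (w n)‖ ^ 2 := by ring
      rw [hmul]
      linarith
  -- pick the index with the smallest gradient
  obtain ⟨k0, hk0mem, hmin⟩ := Finset.exists_min_image (Finset.range K)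
    (fun k => ‖g (w k)‖ ^ 2) ⟨0, Finset.mem_range.mpr (by omega)⟩
  have hk0 : k0 < K := Finset.mem_range.mp hk0mem
  have hK0 : (0 : ℝ) < (K : ℝ) := by exact_mod_cast Nat.lt_of_lt_of_le Nat.zero_lt_one hK
  have hcard : (K : ℝ) * ‖g (w k0)‖ ^ 2 ≤ ∑ k ∈ Finset.range K, ‖g (w k)‖ ^ 2 := by
    have := Finset.card_nsmul_le_sum (Finset.range K) (fun k => ‖g (w k)‖ ^ 2)
      (‖g (w k0)‖ ^ 2) (fun x hx => hmin x hx)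
    simpa [Finset.card_range, nsmul_eq_mul] using this
  have hpmin : (⨅ u : E, (F u + gam / 2 * ‖u - xbar‖ ^ 2)) = p proxF := iInf_of_isMinOn hproxF
  have hpxbar : p xbar = F xbar := by
    rw [hp]
    norm_num
  have hple : p proxF ≤ p (w K) := isMinOn_iff.mp hproxF (w K) trivial
  clear_value c Δ avgP g p
  have hgb : ‖g (w k0)‖ ^ 2 ≤ 2 / ((K : ℝ) * η) * (p xbar - p proxF) + lam ^ 2 * Δ := by
    have htel := hsumle K le_rfl
    rw [hw0] at htel
    have hfinal : (η / 2 * (K : ℝ)) * ‖g (w k0)‖ ^ 2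
        ≤ (p xbar - p proxF) + (η / 2 * (K : ℝ)) * (lam ^ 2 * Δ) := by
      have h5 := mul_le_mul_of_nonneg_left hcard (by positivity : (0:ℝ) ≤ η / 2)
      nlinarith [h5, htel, hple]
    have hpos : (0 : ℝ) < η / 2 * (K : ℝ) := by positivity
    have hb : (η / 2 * (K : ℝ)) * (2 / ((K : ℝ) * η) * (p xbar - p proxF) + lam ^ 2 * Δ)
        = (p xbar - p proxF) + (η / 2 * (K : ℝ)) * (lam ^ 2 * Δ) := by
      field_simp
    exact le_of_mul_le_mul_left (by rw [hb]; exact hfinal) hpos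
  refine ⟨k0, hk0, ?_⟩
  have hkk := hkey (w k0)
  have hmono : (0 : ℝ) ≤ 1 / (gam - lam) ^ 2 := by positivity
  have hpmin' : iInf p = p proxF := by
    conv_lhs => rw [hp]
    exact hpmin
  rw [hpmin', ← hpxbar]
  calc ‖w k0 - proxF‖ ^ 2 ≤ (1 / (gam - lam) ^ 2) * ‖g (w k0)‖ ^ 2 := hkk
    _ ≤ (1 / (gam - lam) ^ 2)
          * (2 / ((K : ℝ) * η) * (p xbar - p proxF) + lam ^ 2 * Δ) :=
        mul_le_mul_of_nonneg_left hgb hmono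
end

section
/- (Client-level convergence, non-convex case.) Let E be a finite-dimensional real inner product space, let f : E → ℝ be differentiable with L_f-Lipschitz gradient (not necessarily convex), let λ > 2L_f ≥ 0, w ∈ E, and 0 < α < 2/(L_f + λ). Define θ⁰ = w and θ^{l+1} = θ^l − α ( ∇f(θ^l) + λ(θ^l − w) ) for l ∈ ℕ. Then for every L ≥ 1 there exists l < L such that ‖θ^l − prox_{f/λ}(w)‖² ≤ ( f(w) − f̃^λ(w) ) / ( L α (1 − α(L_f + λ)/2) (λ − L_f)² ). -/
/-- **Client-level convergence of PerMFL, non-convex case.**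
Let `f : E → ℝ` be differentiable with `L_f`-Lipschitz gradient (not necessarily
convex), `λ > 2L_f ≥ 0`, `w ∈ E`, `0 < α < 2/(L_f + λ)`.  With `θ⁰ = w` and
`θ^{l+1} = θˡ − α(∇f(θˡ) + λ(θˡ − w))`, for every `L ≥ 1` there exists `l < L`
such that `‖θˡ − prox_{f/λ}(w)‖²
≤ (f(w) − f̃^λ(w)) / (Lα(1 − α(L_f + λ)/2)(λ − L_f)²)`. -/
theorem permfl_client_convergence_nonconvex
    {E : Type*} [NormedAddCommGroup E] [InnerProductSpace ℝ E] [FiniteDimensional ℝ E]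
    (f : E → ℝ) (Lf lam : ℝ) (hLf : 0 ≤ Lf) (hlam : 2 * Lf < lam)
    (hdiff : Differentiable ℝ f)
    (hlip : ∀ x y : E, ‖gradient f x - gradient f y‖ ≤ Lf * ‖x - y‖)
    (w : E) (α : ℝ) (hα0 : 0 < α) (hα : α < 2 / (Lf + lam))
    (p : E) (hp : IsMinOn (fun u : E => f u + lam / 2 * ‖u - w‖ ^ 2) Set.univ p)
    (θ : ℕ → E) (hθ0 : θ 0 = w)
    (hrec : ∀ l : ℕ, θ (l + 1) = θ l - α • (gradient f (θ l) + lam • (θ l - w))) :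
    ∀ L : ℕ, 1 ≤ L → ∃ l < L,
      ‖θ l - p‖ ^ 2
        ≤ (f w - ⨅ u : E, (f u + lam / 2 * ‖u - w‖ ^ 2))
            / ((L : ℝ) * α * (1 - α * (Lf + lam) / 2) * (lam - Lf) ^ 2) := by
  intro L hL
  set F : E → ℝ := fun u => f u + lam / 2 * ‖u - w‖ ^ 2 with hFdef
  have hlam0 : 0 < lam := lt_of_le_of_lt (by linarith) hlam
  have hLl : 0 < Lf + lam := by linarith
  have hαLl : α * (Lf + lam) < 2 := (lt_div_iff₀ hLl).mp hα
  have hc1 : 0 < 1 - α * (Lf + lam) / 2 := by linarith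
  set G : E → E := fun u => gradient f u + lam • (u - w) with hGdef
  -- F has gradient G
  have hFd : ∀ x : E, HasFDerivAt F (innerSL ℝ (G x)) x := by
    intro x
    have h1 : HasFDerivAt f (innerSL ℝ (gradient f x)) x := by
      have h := (hdiff x).hasGradientAt
      rw [hasGradientAt_iff_hasFDerivAt] at h
      exact h
    have h2 : HasFDerivAt (fun u : E => u - w) (ContinuousLinearMap.id ℝ E) x :=
      (hasFDerivAt_id x).sub_const w
    have h3 := h2.norm_sq
    have h4 := h1.add (h3.const_mul (lam / 2))
    refine h4.congr_fderiv ?_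
    ext u
    simp only [hGdef, ContinuousLinearMap.add_apply, ContinuousLinearMap.coe_smul',
      Pi.smul_apply, ContinuousLinearMap.smul_apply, ContinuousLinearMap.coe_comp',
      Function.comp_apply, ContinuousLinearMap.coe_id', id_eq, innerSL_apply_apply,
      inner_add_left, real_inner_smul_left, smul_eq_mul]
    ring
  -- derivative along lines
  have hline : ∀ (x v : E) (t : ℝ),
      HasDerivAt (fun t : ℝ => F (x + t • v)) (inner ℝ (G (x + t • v)) v : ℝ) t := by
    intro x v t
    have h1 : HasDerivAt (fun t : ℝ => x + t • v) v t := by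
      simpa using ((hasDerivAt_id t).smul_const v).const_add x
    have h := (hFd (x + t • v)).comp_hasDerivAt t h1
    exact h
  -- Lipschitz property of G
  have hGlip : ∀ a b : E, ‖G a - G b‖ ≤ (Lf + lam) * ‖a - b‖ := by
    intro a b
    have hid : G a - G b = (gradient f a - gradient f b) + lam • (a - b) := by
      simp only [hGdef]; module
    rw [hid]
    calc ‖(gradient f a - gradient f b) + lam • (a - b)‖
        ≤ ‖gradient f a - gradient f b‖ + ‖lam • (a - b)‖ := norm_add_le _ _
      _ ≤ Lf * ‖a - b‖ + lam * ‖a - b‖ := by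
          refine add_le_add (hlip a b) ?_
          rw [norm_smul, Real.norm_eq_abs, abs_of_pos hlam0]
      _ = (Lf + lam) * ‖a - b‖ := by ring
  -- descent lemma
  have hdesc : ∀ x v : E,
      F (x + v) ≤ F x + (inner ℝ (G x) v : ℝ) + (Lf + lam) / 2 * ‖v‖ ^ 2 := by
    intro x v
    set c₁ : ℝ := (inner ℝ (G x) v : ℝ) with hc₁
    set c₂ : ℝ := (Lf + lam) / 2 * ‖v‖ ^ 2 with hc₂
    set ψ : ℝ → ℝ := fun t => F (x + t • v) - (t * c₁ + t ^ 2 * c₂) with hψ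
    have hψd : ∀ t : ℝ, HasDerivAt ψ
        ((inner ℝ (G (x + t • v)) v : ℝ) - (1 * c₁ + (2 * t ^ 1) * c₂)) t := by
      intro t
      exact (hline x v t).sub
        (((hasDerivAt_id t).mul_const c₁).add ((hasDerivAt_pow 2 t).mul_const c₂))
    have hmono : AntitoneOn ψ (Set.Icc (0:ℝ) 1) := by
      apply antitoneOn_of_deriv_nonpos (convex_Icc 0 1)
      · exact Continuous.continuousOn (by
          exact continuous_iff_continuousAt.mpr fun t => (hψd t).continuousAt)
      · exact fun t ht => ((hψd t).differentiableAt).differentiableWithinAt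
      · intro t ht
        rw [interior_Icc] at ht
        rw [(hψd t).deriv]
        have hb : (inner ℝ (G (x + t • v)) v : ℝ) - c₁ ≤ (Lf + lam) * t * ‖v‖ ^ 2 := by
          have h1 : (inner ℝ (G (x + t • v)) v : ℝ) - c₁
              = (inner ℝ (G (x + t • v) - G x) v : ℝ) := by
            rw [hc₁, inner_sub_left]
          rw [h1]
          calc (inner ℝ (G (x + t • v) - G x) v : ℝ)
              ≤ ‖G (x + t • v) - G x‖ * ‖v‖ := real_inner_le_norm _ _
            _ ≤ ((Lf + lam) * ‖x + t • v - x‖) * ‖v‖ := by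
                apply mul_le_mul_of_nonneg_right (hGlip _ _) (norm_nonneg _)
            _ = (Lf + lam) * t * ‖v‖ ^ 2 := by
                rw [add_sub_cancel_left, norm_smul, Real.norm_eq_abs, abs_of_pos ht.1]
                ring
        have ht0 : 0 < t := ht.1
        simp only [hc₂] at hb ⊢
        nlinarith [hb]
    have h01 := hmono (Set.left_mem_Icc.mpr zero_le_one) (Set.right_mem_Icc.mpr zero_le_one)
      zero_le_one
    simp only [hψ, zero_smul, add_zero, one_smul, zero_mul, one_mul, zero_pow, one_pow,
      zero_add, mul_zero, sub_zero] at h01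
    linarith
  -- descent step
  set c : ℝ := α * (1 - α * (Lf + lam) / 2) with hcdef
  have hcpos : 0 < c := mul_pos hα0 hc1
  have hstep : ∀ l : ℕ, F (θ (l + 1)) + c * ‖G (θ l)‖ ^ 2 ≤ F (θ l) := by
    intro l
    have he : θ (l + 1) = θ l + (-(α • G (θ l))) := by
      rw [hrec l]; simp only [hGdef]; abel
    have h := hdesc (θ l) (-(α • G (θ l)))
    rw [← he] at h
    have h1 : (inner ℝ (G (θ l)) (-(α • G (θ l))) : ℝ) = -(α * ‖G (θ l)‖ ^ 2) := by
      rw [inner_neg_right, real_inner_smul_right, real_inner_self_eq_norm_sq]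
    have h2 : ‖-(α • G (θ l))‖ ^ 2 = α ^ 2 * ‖G (θ l)‖ ^ 2 := by
      rw [norm_neg, norm_smul, Real.norm_eq_abs, abs_of_pos hα0, mul_pow]
    rw [h1, h2] at h
    simp only [hcdef]
    nlinarith [h]
  -- summed bound
  have hsum : ∀ N : ℕ, c * ∑ l ∈ Finset.range N, ‖G (θ l)‖ ^ 2 ≤ F (θ 0) - F (θ N) := by
    intro N
    induction N with
    | zero => simp
    | succ n ih =>
        rw [Finset.sum_range_succ, mul_add]
        have := hstep n
        linarith
  -- infimum facts
  have hmin : ∀ u : E, F p ≤ F u := fun u => isMinOn_iff.mp hp u (Set.mem_univ u)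
  have hbdd : BddBelow (Set.range F) := ⟨F p, by rintro _ ⟨u, rfl⟩; exact hmin u⟩
  have hinf_le : ∀ u : E, (⨅ u : E, F u) ≤ F u := fun u => ciInf_le hbdd u
  have hFw : F w = f w := by simp [hFdef]
  -- G p = 0
  have hGp : G p = 0 := by
    have h0 : IsLocalMin F p := hp.isLocalMin Filter.univ_mem
    have h1 := h0.hasFDerivAt_eq_zero (hFd p)
    have h2 : (inner ℝ (G p) (G p) : ℝ) = 0 := by
      have := congrFun (congrArg DFunLike.coe h1) (G p)
      simpa using this
    exact inner_self_eq_zero.mp h2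
  -- strong monotonicity bound
  have hμ : 0 < lam - Lf := by linarith
  have hkey : ∀ x : E, (lam - Lf) ^ 2 * ‖x - p‖ ^ 2 ≤ ‖G x‖ ^ 2 := by
    intro x
    have hid : G x - G p = (gradient f x - gradient f p) + lam • (x - p) := by
      simp only [hGdef]; module
    have h1 : (lam - Lf) * ‖x - p‖ ^ 2 ≤ (inner ℝ (G x - G p) (x - p) : ℝ) := by
      rw [hid, inner_add_left, real_inner_smul_left, real_inner_self_eq_norm_sq]
      have h2 : -(Lf * (‖x - p‖ * ‖x - p‖))
          ≤ (inner ℝ (gradient f x - gradient f p) (x - p) : ℝ) := by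
        have habs := abs_real_inner_le_norm (gradient f x - gradient f p) (x - p)
        have h3 := mul_le_mul_of_nonneg_right (hlip x p) (norm_nonneg (x - p))
        have h4 := neg_abs_le (inner ℝ (gradient f x - gradient f p) (x - p) : ℝ)
        nlinarith
      have hsq : ‖x - p‖ ^ 2 = ‖x - p‖ * ‖x - p‖ := sq (‖x - p‖)
      rw [hsq]
      linarith [h2]
    have h6 : (inner ℝ (G x - G p) (x - p) : ℝ) ≤ ‖G x‖ * ‖x - p‖ := by
      rw [hGp, sub_zero]
      exact real_inner_le_norm _ _
    have h7 : (lam - Lf) * ‖x - p‖ ≤ ‖G x‖ := by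
      rcases eq_or_lt_of_le (norm_nonneg (x - p)) with hz | hz
      · rw [← hz]; simpa using norm_nonneg (G x)
      · have h10 := h1.trans h6
        rw [pow_two] at h10
        rw [← mul_le_mul_iff_of_pos_right hz]
        calc (lam - Lf) * ‖x - p‖ * ‖x - p‖
            = (lam - Lf) * (‖x - p‖ * ‖x - p‖) := by ring
          _ ≤ ‖G x‖ * ‖x - p‖ := h10
    have h8 : 0 ≤ (lam - Lf) * ‖x - p‖ := mul_nonneg hμ.le (norm_nonneg _)
    have h9 := mul_self_le_mul_self h8 h7
    calc (lam - Lf) ^ 2 * ‖x - p‖ ^ 2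
        = ((lam - Lf) * ‖x - p‖) * ((lam - Lf) * ‖x - p‖) := by ring
      _ ≤ ‖G x‖ * ‖G x‖ := h9
      _ = ‖G x‖ ^ 2 := (sq (‖G x‖)).symm
  -- conclusion
  by_contra hcon
  push_neg at hcon
  set I : ℝ := ⨅ u : E, F u with hI
  set B : ℝ := (f w - I) / ((L : ℝ) * α * (1 - α * (Lf + lam) / 2) * (lam - Lf) ^ 2) with hB
  have hLpos : (0:ℝ) < L := by exact_mod_cast hL
  have hlb : ∀ l ∈ Finset.range L, (lam - Lf) ^ 2 * B < ‖G (θ l)‖ ^ 2 := by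
    intro l hl
    have h1 := hcon l (Finset.mem_range.mp hl)
    have h2 := hkey (θ l)
    have h3 : (lam - Lf) ^ 2 * B < (lam - Lf) ^ 2 * ‖θ l - p‖ ^ 2 :=
      mul_lt_mul_of_pos_left h1 (by positivity)
    linarith
  have hsumlt : (L : ℝ) * ((lam - Lf) ^ 2 * B) < ∑ l ∈ Finset.range L, ‖G (θ l)‖ ^ 2 := by
    have h := Finset.sum_lt_sum_of_nonempty (Finset.nonempty_range_iff.mpr (by omega)) hlb
    simpa [Finset.sum_const, nsmul_eq_mul, Finset.card_range] using h
  have hub : ∑ l ∈ Finset.range L, ‖G (θ l)‖ ^ 2 ≤ (f w - I) / c := by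
    have h1 := hsum L
    have h2 : I ≤ F (θ L) := hinf_le (θ L)
    have h3 : F (θ 0) = f w := by rw [hθ0, hFw]
    rw [le_div_iff₀ hcpos]
    rw [mul_comm]
    linarith [h1, h2, h3]
  have heq : (L : ℝ) * ((lam - Lf) ^ 2 * B) = (f w - I) / c := by
    have hK0 : ((L:ℝ) * (lam - Lf) ^ 2) ≠ 0 := ne_of_gt (mul_pos hLpos (pow_pos hμ 2))
    have hD : (L : ℝ) * α * (1 - α * (Lf + lam) / 2) * (lam - Lf) ^ 2
        = ((L:ℝ) * (lam - Lf) ^ 2) * c := by rw [hcdef]; ring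
    have h1 : (L : ℝ) * ((lam - Lf) ^ 2 * ((f w - I) / (((L:ℝ) * (lam - Lf) ^ 2) * c)))
        = ((L:ℝ) * (lam - Lf) ^ 2) * (f w - I) / (((L:ℝ) * (lam - Lf) ^ 2) * c) := by
      ring
    rw [hB, hD, h1]
    exact mul_div_mul_left _ _ hK0
  linarith
end
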